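/- arXiv:1409.0707 — 8 statements merged into one kernel-verified Lean document; each statement's English description precedes it below -/
import Mathlib

section
/- For ν ∈ ℝ, the modified Bessel function K_ν(t) = ∫_0^∞ e^{-t cosh z} cosh(ν z) dz satisfies the modified Bessel differential equation: t² K_ν''(t) + t K_ν'(t) − (t² + ν²) K_ν(t) = 0 for all t > 0. -/
open MeasureTheory Real

/-- The modified Bessel function `K_ν(t) = ∫_0^∞ e^{-t cosh z} cosh(ν z) dz`. -/
noncomputable def besselK (ν : ℝ) (t : ℝ) : ℝ :=
  ∫ z in Set.Ioi (0 : ℝ), Real.exp (-t * Real.cosh z) * Real.cosh (ν * z)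

section Aux

open Filter Asymptotics Set Topology

lemma half_exp_le_cosh (z : ℝ) : Real.exp z / 2 ≤ Real.cosh z := by
  rw [Real.cosh_eq]; have := (Real.exp_pos (-z)).le; linarith

lemma cosh_le_exp_abs (x : ℝ) : Real.cosh x ≤ Real.exp |x| := by
  rw [Real.cosh_eq]
  have h1 : Real.exp x ≤ Real.exp |x| := Real.exp_le_exp.2 (le_abs_self x)
  have h2 : Real.exp (-x) ≤ Real.exp |x| := Real.exp_le_exp.2 (neg_le_abs x)
  linarith

lemma abs_sinh_le_cosh (x : ℝ) : |Real.sinh x| ≤ Real.cosh x := by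
  rw [Real.abs_sinh, ← Real.cosh_abs]; exact (Real.sinh_lt_cosh _).le

lemma tendsto_aux (t c : ℝ) (ht : 0 < t) :
    Tendsto (fun z => Real.exp (c * z - t * Real.cosh z)) atTop (𝓝 0) := by
  have key : Tendsto (fun z : ℝ => c * z - t * Real.cosh z) atTop atBot := by
    have h2 : Tendsto (fun z : ℝ => c * (z * Real.exp (-z)) - t / 2) atTop (𝓝 (c * 0 - t / 2)) := by
      exact (((Real.tendsto_pow_mul_exp_neg_atTop_nhds_zero 1).congr
        (by simp)).const_mul c).sub_const _
    have h1 : Tendsto (fun z : ℝ => Real.exp z * (c * (z * Real.exp (-z)) - t / 2)) atTop atBot :=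
      Filter.Tendsto.atTop_mul_neg (by linarith) Real.tendsto_exp_atTop h2
    apply tendsto_atBot_mono _ h1
    intro z
    have h3 : Real.exp z / 2 ≤ Real.cosh z := half_exp_le_cosh z
    have h4 : Real.exp z * Real.exp (-z) = 1 := by rw [← Real.exp_add]; simp
    have h5 : Real.exp z * (c * (z * Real.exp (-z)) - t / 2)
        = c * z - t / 2 * Real.exp z := by
      rw [mul_sub, show Real.exp z * (c * (z * Real.exp (-z)))
        = c * z * (Real.exp z * Real.exp (-z)) by ring, h4]; ring
    rw [h5]
    nlinarith [mul_le_mul_of_nonneg_left h3 ht.le]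
  exact Real.tendsto_exp_atBot.comp key

lemma isBigO_aux (t c : ℝ) (ht : 0 < t) :
    (fun z => Real.exp (c * z - t * Real.cosh z)) =O[atTop] fun z => Real.exp (-z) := by
  apply IsLittleO.isBigO
  rw [isLittleO_iff_tendsto (fun x hx => absurd hx (Real.exp_ne_zero _))]
  refine (tendsto_aux t (c + 1) ht).congr (fun z => ?_)
  rw [← Real.exp_sub]
  congr 1
  ring

lemma integrableOn_aux (ν t : ℝ) (ht : 0 < t) (n : ℕ) :
    IntegrableOn (fun z => Real.cosh z ^ n * (Real.exp (-t * Real.cosh z) * Real.cosh (ν * z)))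
      (Set.Ioi (0 : ℝ)) := by
  apply integrable_of_isBigO_exp_neg one_pos
  · exact (by fun_prop : Continuous fun z : ℝ =>
      Real.cosh z ^ n * (Real.exp (-t * Real.cosh z) * Real.cosh (ν * z))).continuousOn
  · simp only [neg_one_mul]
    apply IsBigO.trans _ (isBigO_aux t ((n : ℝ) + |ν|) ht)
    apply IsBigO.of_bound 1
    filter_upwards [eventually_ge_atTop (0 : ℝ)] with z hz
    have h1 : Real.cosh z ≤ Real.exp z := by
      simpa [abs_of_nonneg hz] using cosh_le_exp_abs z
    have h2 : Real.cosh (ν * z) ≤ Real.exp (|ν| * z) := by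
      have := cosh_le_exp_abs (ν * z)
      rwa [abs_mul, abs_of_nonneg hz] at this
    have h3 : Real.cosh z ^ n ≤ Real.exp z ^ n :=
      pow_le_pow_left₀ (Real.cosh_pos z).le h1 n
    rw [Real.norm_eq_abs, Real.norm_eq_abs, abs_of_pos (Real.exp_pos _), one_mul,
      abs_of_nonneg (by positivity)]
    calc Real.cosh z ^ n * (Real.exp (-t * Real.cosh z) * Real.cosh (ν * z))
        ≤ Real.exp z ^ n * (Real.exp (-t * Real.cosh z) * Real.exp (|ν| * z)) := by
          apply mul_le_mul h3 (mul_le_mul_of_nonneg_left h2 (Real.exp_pos _).le)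
            (by positivity) (by positivity)
      _ = Real.exp (((n : ℝ) + |ν|) * z - t * Real.cosh z) := by
          rw [← Real.exp_nat_mul, ← Real.exp_add, ← Real.exp_add]
          congr 1
          ring

/-- The integral with an extra `cosh z ^ n` factor. -/
noncomputable def Kn (ν : ℝ) (n : ℕ) (t : ℝ) : ℝ :=
  ∫ z in Set.Ioi (0 : ℝ), Real.cosh z ^ n * (Real.exp (-t * Real.cosh z) * Real.cosh (ν * z))

lemma hasDerivAt_Kn (ν : ℝ) (n : ℕ) {t : ℝ} (ht : 0 < t) :
    HasDerivAt (Kn ν n) (-(Kn ν (n + 1) t)) t := by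
  have h := hasDerivAt_integral_of_dominated_loc_of_deriv_le
    (F := fun x z => Real.cosh z ^ n * (Real.exp (-x * Real.cosh z) * Real.cosh (ν * z)))
    (F' := fun x z => -(Real.cosh z ^ (n + 1) * (Real.exp (-x * Real.cosh z) * Real.cosh (ν * z))))
    (μ := volume.restrict (Set.Ioi (0 : ℝ))) (x₀ := t)
    (bound := fun z => Real.cosh z ^ (n + 1) *
      (Real.exp (-(t / 2) * Real.cosh z) * Real.cosh (ν * z)))
    (Metric.ball_mem_nhds t (half_pos ht)) ?_ ?_ ?_ ?_ ?_ ?_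
  · have h2 := h.2
    simp only [integral_neg] at h2
    exact h2
  · exact Eventually.of_forall fun x => (by fun_prop : Continuous fun z : ℝ =>
      Real.cosh z ^ n * (Real.exp (-x * Real.cosh z) * Real.cosh (ν * z))).aestronglyMeasurable
  · exact integrableOn_aux ν t ht n
  · exact ((by fun_prop : Continuous fun z : ℝ =>
      Real.cosh z ^ (n + 1) * (Real.exp (-t * Real.cosh z) * Real.cosh (ν * z))).neg).aestronglyMeasurable
  · refine ae_of_all _ fun z => fun x hx => ?_
    have hx2 : t / 2 ≤ x := by
      have := Metric.mem_ball.mp hx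
      rw [Real.dist_eq] at this
      have := abs_lt.mp this
      linarith [this.1]
    have he : Real.exp (-x * Real.cosh z) ≤ Real.exp (-(t / 2) * Real.cosh z) := by
      apply Real.exp_le_exp.2
      have := (Real.cosh_pos z).le
      nlinarith
    rw [norm_neg, Real.norm_eq_abs, abs_of_nonneg (by positivity)]
    apply mul_le_mul_of_nonneg_left _ (by positivity)
    exact mul_le_mul_of_nonneg_right he (Real.cosh_pos _).le
  · exact integrableOn_aux ν (t / 2) (half_pos ht) (n + 1)
  · refine ae_of_all _ fun z => fun x hx => ?_
    have hd : HasDerivAt (fun x : ℝ => -x * Real.cosh z) (-Real.cosh z) x := by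
      simpa using ((hasDerivAt_id x).neg.mul_const (Real.cosh z))
    have := ((hd.exp.mul_const (Real.cosh (ν * z))).const_mul (Real.cosh z ^ n))
    refine this.congr_deriv ?_
    ring

lemma deriv_besselK (ν : ℝ) {t : ℝ} (ht : 0 < t) :
    deriv (besselK ν) t = -(Kn ν 1 t) := by
  have h0 : besselK ν = Kn ν 0 := by
    funext s
    simp [besselK, Kn]
  rw [h0]
  simpa using (hasDerivAt_Kn ν 0 ht).deriv

lemma deriv2_besselK (ν : ℝ) {t : ℝ} (ht : 0 < t) :
    deriv (deriv (besselK ν)) t = Kn ν 2 t := by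
  have hev : deriv (besselK ν) =ᶠ[nhds t] fun s => -(Kn ν 1 s) := by
    filter_upwards [Ioi_mem_nhds ht] with s hs
    exact deriv_besselK ν hs
  rw [hev.deriv_eq]
  simpa using ((hasDerivAt_Kn ν 1 ht).neg).deriv

end Aux

open Filter Asymptotics Set Topology in
theorem stmt0 (ν : ℝ) :
    ∀ t : ℝ, 0 < t →
      t ^ 2 * deriv (deriv (besselK ν)) t + t * deriv (besselK ν) t
        - (t ^ 2 + ν ^ 2) * besselK ν t = 0 := by
  intro t ht
  have h0 : besselK ν t = Kn ν 0 t := by simp [besselK, Kn]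
  rw [deriv_besselK ν ht, deriv2_besselK ν ht, h0]
  have hA := integrableOn_aux ν t ht 2
  have hB := integrableOn_aux ν t ht 1
  have hC := integrableOn_aux ν t ht 0
  set f0 : ℝ → ℝ := fun z => Real.cosh z ^ 0 * (Real.exp (-t * Real.cosh z) * Real.cosh (ν * z)) with hf0
  set f1 : ℝ → ℝ := fun z => Real.cosh z ^ 1 * (Real.exp (-t * Real.cosh z) * Real.cosh (ν * z)) with hf1
  set f2 : ℝ → ℝ := fun z => Real.cosh z ^ 2 * (Real.exp (-t * Real.cosh z) * Real.cosh (ν * z)) with hf2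
  set g : ℝ → ℝ := fun z => Real.exp (-t * Real.cosh z) *
    ((t ^ 2 * Real.sinh z ^ 2 - t * Real.cosh z - ν ^ 2) * Real.cosh (ν * z)) with hg
  have heq : ∀ z, t ^ 2 * f2 z - t * f1 z - (t ^ 2 + ν ^ 2) * f0 z = g z := by
    intro z
    rw [hf0, hf1, hf2, hg]
    simp only
    rw [Real.sinh_sq]
    ring
  have hgint : IntegrableOn g (Set.Ioi (0 : ℝ)) := by
    have : g = fun z => t ^ 2 * f2 z - t * f1 z - (t ^ 2 + ν ^ 2) * f0 z :=
      funext fun z => (heq z).symm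
    rw [this]
    exact ((hA.const_mul _).sub (hB.const_mul _)).sub (hC.const_mul _)
  have key : (∫ z in Set.Ioi (0 : ℝ), g z) = 0 := by
    have hval := integral_Ioi_of_hasDerivAt_of_tendsto
      (f := fun z => Real.exp (-t * Real.cosh z) *
        (-t * Real.sinh z * Real.cosh (ν * z) - ν * Real.sinh (ν * z)))
      (f' := g) (a := 0) (m := 0) ?_ ?_ hgint ?_
    · simpa using hval
    · exact (by fun_prop : Continuous fun z : ℝ => Real.exp (-t * Real.cosh z) *
        (-t * Real.sinh z * Real.cosh (ν * z) - ν * Real.sinh (ν * z))).continuousWithinAt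
    · intro z hz
      have h1 : HasDerivAt (fun z : ℝ => -t * Real.cosh z) (-t * Real.sinh z) z :=
        (Real.hasDerivAt_cosh z).const_mul (-t)
      have he : HasDerivAt (fun z : ℝ => Real.exp (-t * Real.cosh z))
          (Real.exp (-t * Real.cosh z) * (-t * Real.sinh z)) z := h1.exp
      have hs : HasDerivAt (fun z : ℝ => Real.sinh (ν * z)) (Real.cosh (ν * z) * ν) z := by
        simpa [Function.comp_def] using (Real.hasDerivAt_sinh (ν * z)).comp z ((hasDerivAt_id z).const_mul ν)
      have hc : HasDerivAt (fun z : ℝ => Real.cosh (ν * z)) (Real.sinh (ν * z) * ν) z := by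
        simpa [Function.comp_def] using (Real.hasDerivAt_cosh (ν * z)).comp z ((hasDerivAt_id z).const_mul ν)
      have hu : HasDerivAt (fun z : ℝ => -t * Real.sinh z * Real.cosh (ν * z) - ν * Real.sinh (ν * z))
          ((-t * Real.cosh z) * Real.cosh (ν * z) + (-t * Real.sinh z) * (Real.sinh (ν * z) * ν)
            - ν * (Real.cosh (ν * z) * ν)) z :=
        (((Real.hasDerivAt_sinh z).const_mul (-t)).mul hc).sub (hs.const_mul ν)
      have := he.mul hu
      refine this.congr_deriv ?_
      rw [hg]
      ring
    · apply squeeze_zero_norm' (a := fun z => t * Real.exp ((1 + |ν|) * z - t * Real.cosh z)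
        + |ν| * Real.exp (|ν| * z - t * Real.cosh z))
      · filter_upwards [eventually_ge_atTop (0 : ℝ)] with z hz
        have hcz : Real.cosh z ≤ Real.exp z := by
          simpa [abs_of_nonneg hz] using cosh_le_exp_abs z
        have h2 : Real.cosh (ν * z) ≤ Real.exp (|ν| * z) := by
          have := cosh_le_exp_abs (ν * z)
          rwa [abs_mul, abs_of_nonneg hz] at this
        have h1 : |Real.sinh z| ≤ Real.exp z := (abs_sinh_le_cosh z).trans hcz
        have h3 : |Real.sinh (ν * z)| ≤ Real.exp (|ν| * z) := (abs_sinh_le_cosh _).trans h2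
        have hepos := (Real.exp_pos (-t * Real.cosh z)).le
        rw [Real.norm_eq_abs, abs_mul, abs_of_pos (Real.exp_pos _)]
        have htri : |(-t * Real.sinh z * Real.cosh (ν * z) - ν * Real.sinh (ν * z))|
            ≤ t * (Real.exp z * Real.exp (|ν| * z)) + |ν| * Real.exp (|ν| * z) := by
          refine (abs_sub _ _).trans (add_le_add ?_ ?_)
          · calc |-t * Real.sinh z * Real.cosh (ν * z)|
                = t * |Real.sinh z| * Real.cosh (ν * z) := by
                  rw [abs_mul, abs_mul, abs_neg, abs_of_pos ht, abs_of_pos (Real.cosh_pos _)]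
              _ ≤ t * Real.exp z * Real.exp (|ν| * z) :=
                  mul_le_mul (mul_le_mul_of_nonneg_left h1 ht.le) h2 (Real.cosh_pos _).le
                    (by positivity)
              _ = t * (Real.exp z * Real.exp (|ν| * z)) := by ring
          · rw [abs_mul]
            exact mul_le_mul_of_nonneg_left h3 (abs_nonneg ν)
        calc Real.exp (-t * Real.cosh z) * |(-t * Real.sinh z * Real.cosh (ν * z) - ν * Real.sinh (ν * z))|
            ≤ Real.exp (-t * Real.cosh z) *
              (t * (Real.exp z * Real.exp (|ν| * z)) + |ν| * Real.exp (|ν| * z)) :=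
              mul_le_mul_of_nonneg_left htri hepos
          _ = t * Real.exp ((1 + |ν|) * z - t * Real.cosh z)
              + |ν| * Real.exp (|ν| * z - t * Real.cosh z) := by
              have E1 : Real.exp ((1 + |ν|) * z - t * Real.cosh z)
                  = Real.exp z * Real.exp (|ν| * z) * Real.exp (-t * Real.cosh z) := by
                rw [← Real.exp_add, ← Real.exp_add]; congr 1; ring
              have E2 : Real.exp (|ν| * z - t * Real.cosh z)
                  = Real.exp (|ν| * z) * Real.exp (-t * Real.cosh z) := by
                rw [← Real.exp_add]; congr 1; ring
              rw [E1, E2]; ring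
      · have hT1 := (tendsto_aux t (1 + |ν|) ht).const_mul t
        have hT2 := (tendsto_aux t (|ν|) ht).const_mul |ν|
        simpa using hT1.add hT2
  have h12 : Integrable (fun z => t ^ 2 * f2 z - t * f1 z)
      (volume.restrict (Set.Ioi (0 : ℝ))) := (hA.const_mul _).sub (hB.const_mul _)
  have hC' : Integrable (fun z => (t ^ 2 + ν ^ 2) * f0 z)
      (volume.restrict (Set.Ioi (0 : ℝ))) := hC.const_mul _
  have hA' : Integrable (fun z => t ^ 2 * f2 z)
      (volume.restrict (Set.Ioi (0 : ℝ))) := hA.const_mul _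
  have hB' : Integrable (fun z => t * f1 z)
      (volume.restrict (Set.Ioi (0 : ℝ))) := hB.const_mul _
  have hfinal : t ^ 2 * Kn ν 2 t - t * Kn ν 1 t - (t ^ 2 + ν ^ 2) * Kn ν 0 t = 0 := by
    have hsum : (∫ z in Set.Ioi (0 : ℝ), (t ^ 2 * f2 z - t * f1 z - (t ^ 2 + ν ^ 2) * f0 z))
        = t ^ 2 * Kn ν 2 t - t * Kn ν 1 t - (t ^ 2 + ν ^ 2) * Kn ν 0 t := by
      rw [integral_sub h12 hC', integral_sub hA' hB',
        integral_const_mul, integral_const_mul, integral_const_mul]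
      rfl
    rw [← hsum]
    simp only [heq]
    exact key
  linarith
end

section
/- Let m ∈ ℕ and let λ : [0,∞) → ℝ be a C² function satisfying λ''(t) = t^m λ(t) with λ(0) = 1 and λ(t) → 0 as t → +∞. Then λ(t) > 0 for all t ≥ 0, λ is strictly decreasing on [0,∞), and λ'(t) < 0 for all t > 0. -/
open Set Filter Real Topology

theorem stmt2 (m : ℕ) (lam : ℝ → ℝ)
    (hC2 : ContDiff ℝ 2 lam)
    (hode : ∀ t : ℝ, 0 ≤ t → deriv (deriv lam) t = t ^ m * lam t)
    (h0 : lam 0 = 1)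
    (hlim : Filter.Tendsto lam Filter.atTop (nhds 0)) :
    (∀ t : ℝ, 0 ≤ t → 0 < lam t) ∧
      StrictAntiOn lam (Set.Ici 0) ∧
      (∀ t : ℝ, 0 < t → deriv lam t < 0) := by
  have h2 : ContDiff ℝ (1+1) lam := by norm_num; exact hC2
  have hd1 : Differentiable ℝ lam := hC2.differentiable (by norm_num)
  have hderiv1 : ContDiff ℝ 1 (deriv lam) := (contDiff_succ_iff_deriv.mp h2).2.2
  have hd2 : Differentiable ℝ (deriv lam) := hderiv1.differentiable one_ne_zero
  have hcont : Continuous lam := hd1.continuous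
  have hcont' : Continuous (deriv lam) := hd2.continuous
  -- eventually bounds from the limit
  obtain ⟨B, hB⟩ : ∃ B, ∀ t ≥ B, -1 < lam t ∧ lam t < 1 := by
    have : ∀ᶠ t in atTop, -1 < lam t ∧ lam t < 1 := by
      filter_upwards [hlim.eventually (eventually_gt_nhds (by norm_num : (-1:ℝ) < 0)),
        hlim.eventually (eventually_lt_nhds (by norm_num : (0:ℝ) < 1))] with t h1 h2
      exact ⟨h1, h2⟩
    exact eventually_atTop.mp this
  -- Step 1: positivity
  have hpos : ∀ t : ℝ, 0 ≤ t → 0 < lam t := by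
    by_contra hcon
    push_neg at hcon
    obtain ⟨s, hs0, hs⟩ := hcon
    set Z : Set ℝ := Icc 0 s ∩ lam ⁻¹' Iic 0 with hZdef
    have hZc : IsClosed Z := isClosed_Icc.inter (isClosed_Iic.preimage hcont)
    have hZne : Z.Nonempty := ⟨s, ⟨hs0, le_refl s⟩, hs⟩
    have hZbdd : BddBelow Z := ⟨0, fun x hx => hx.1.1⟩
    set t0 := sInf Z with ht0def
    have ht0Z : t0 ∈ Z := hZc.csInf_mem hZne hZbdd
    have ht0nn : 0 ≤ t0 := ht0Z.1.1
    have hbefore : ∀ t, 0 ≤ t → t < t0 → 0 < lam t := by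
      intro t ht htlt
      by_contra h
      push_neg at h
      have : t ∈ Z := ⟨⟨ht, htlt.le.trans ht0Z.1.2⟩, h⟩
      exact absurd (csInf_le hZbdd this) (not_le.mpr htlt)
    have ht0pos : 0 < t0 := by
      rcases ht0nn.lt_or_eq with h | h
      · exact h
      · exfalso
        have := ht0Z.2
        rw [← h] at this
        simp only [mem_preimage, mem_Iic, h0] at this
        linarith
    have hlamt0 : lam t0 = 0 := by
      refine le_antisymm ht0Z.2 ?_
      have htend : Tendsto lam (𝓝[<] t0) (𝓝 (lam t0)) :=
        (hcont.continuousAt).continuousWithinAt.tendsto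
      refine ge_of_tendsto htend ?_
      filter_upwards [Ioo_mem_nhdsLT_of_mem (⟨ht0pos, le_refl t0⟩ : t0 ∈ Ioc 0 t0)] with t ht
      exact (hbefore t ht.1.le ht.2).le
    have hlampos_before : ∀ t ∈ Ioo (0:ℝ) t0, 0 < lam t := fun t ht => hbefore t ht.1.le ht.2
    -- derivative at t0 is ≤ 0
    have hd_t0 : deriv lam t0 ≤ 0 := by
      have hslope : Tendsto (slope lam t0) (𝓝[≠] t0) (𝓝 (deriv lam t0)) :=
        hasDerivAt_iff_tendsto_slope.mp (hd1 t0).hasDerivAt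
      have hslope' : Tendsto (slope lam t0) (𝓝[<] t0) (𝓝 (deriv lam t0)) :=
        hslope.mono_left (nhdsWithin_mono _ (fun x hx => ne_of_lt hx))
      refine le_of_tendsto hslope' ?_
      filter_upwards [Ioo_mem_nhdsLT_of_mem (⟨ht0pos, le_refl t0⟩ : t0 ∈ Ioc 0 t0)] with t ht
      have h1 : 0 < lam t := hbefore t ht.1.le ht.2
      have h2 : t - t0 < 0 := by linarith [ht.2]
      rw [slope_def_field]
      rw [hlamt0]
      exact le_of_lt (div_neg_of_pos_of_neg (by linarith) h2)
    rcases hd_t0.lt_or_eq with hdlt | hdeq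
    -- Case A : deriv lam t0 < 0
    · -- lam < 0 strictly after t0
      have hneg : ∀ t, t0 < t → lam t < 0 := by
        -- first, negative on a small right interval
        have hslope : Tendsto (slope lam t0) (𝓝[>] t0) (𝓝 (deriv lam t0)) :=
          (hasDerivAt_iff_tendsto_slope.mp (hd1 t0).hasDerivAt).mono_left
            (nhdsWithin_mono _ (fun x hx => ne_of_gt hx))
        have hev : ∀ᶠ t in 𝓝[>] t0, slope lam t0 t < 0 :=
          hslope.eventually (eventually_lt_nhds hdlt)
        obtain ⟨b, hb, hbsub⟩ := mem_nhdsGT_iff_exists_Ioo_subset.mp hev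
        have hb' : t0 < b := hb
        have hbneg : ∀ t ∈ Ioo t0 b, lam t < 0 := by
          intro t ht
          have := hbsub ht
          simp only [Set.mem_setOf_eq, slope_def_field, hlamt0] at this
          have h2 : 0 < t - t0 := by linarith [ht.1]
          rw [div_neg_iff] at this
          rcases this with ⟨_, h⟩ | ⟨h, _⟩
          · linarith
          · linarith
        intro T hT
        by_contra hTc
        push_neg at hTc
        have hTb : b ≤ T := by
          by_contra h
          push_neg at h
          exact absurd (hbneg T ⟨hT, h⟩) (not_lt.mpr hTc)
        set p := (t0 + b) / 2 with hpdef
        have hpmem : p ∈ Ioo t0 b := ⟨by simp only [hpdef]; linarith [hb'], by simp only [hpdef]; linarith [hb']⟩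
        have hpneg : lam p < 0 := hbneg p hpmem
        have hpT : p ≤ T := le_trans hpmem.2.le hTb
        -- first zero after p
        set Z2 : Set ℝ := Icc p T ∩ lam ⁻¹' {0} with hZ2def
        have hZ2c : IsClosed Z2 := isClosed_Icc.inter (isClosed_singleton.preimage hcont)
        have hZ2ne : Z2.Nonempty := by
          have := intermediate_value_Icc hpT hcont.continuousOn
          have h0mem : (0:ℝ) ∈ Icc (lam p) (lam T) := ⟨hpneg.le, hTc⟩
          obtain ⟨c2, hc2, hc2v⟩ := this h0mem
          exact ⟨c2, hc2, hc2v⟩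
        have hZ2bdd : BddBelow Z2 := ⟨p, fun x hx => hx.1.1⟩
        set c2 := sInf Z2 with hc2def
        have hc2Z : c2 ∈ Z2 := hZ2c.csInf_mem hZ2ne hZ2bdd
        have hc2p : p ≤ c2 := hc2Z.1.1
        have hc2v : lam c2 = 0 := hc2Z.2
        have hc2t0 : t0 < c2 := lt_of_lt_of_le hpmem.1 hc2p
        -- lam < 0 on (t0, c2)
        have hnegmid : ∀ t, t0 < t → t < c2 → lam t < 0 := by
          intro t ht1 ht2
          rcases lt_or_ge t b with h | h
          · exact hbneg t ⟨ht1, h⟩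
          · -- t ∈ [b, c2) ⊆ [p, c2)
            by_contra hc
            push_neg at hc
            have hpt : p ≤ t := le_trans hpmem.2.le h
            obtain ⟨z, hz, hzv⟩ := intermediate_value_Icc hpt hcont.continuousOn ⟨hpneg.le, hc⟩
            have : z ∈ Z2 := ⟨⟨hz.1, hz.2.trans (ht2.le.trans ?_)⟩, hzv⟩
            · have := csInf_le hZ2bdd this
              have : z < c2 := lt_of_le_of_lt hz.2 ht2
              linarith [csInf_le hZ2bdd ⟨⟨hz.1, le_trans hz.2 (le_trans ht2.le (le_trans (le_refl c2) (hc2Z.1.2)))⟩, hzv⟩]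
            · exact hc2Z.1.2
        -- deriv lam antitone on [t0, c2]
        have hanti : AntitoneOn (deriv lam) (Icc t0 c2) := by
          apply antitoneOn_of_deriv_nonpos (convex_Icc t0 c2) hcont'.continuousOn
            (hd2.differentiableOn)
          intro x hx
          rw [interior_Icc] at hx
          rw [hode x (le_trans ht0pos.le hx.1.le)]
          exact mul_nonpos_of_nonneg_of_nonpos (pow_nonneg (le_trans ht0pos.le hx.1.le) m)
            (hnegmid x hx.1 hx.2).le
        have hdneg : ∀ x ∈ Ioo t0 c2, deriv lam x < 0 := by
          intro x hx
          have := hanti ⟨le_refl t0, hc2t0.le⟩ ⟨hx.1.le, hx.2.le⟩ hx.1.le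
          linarith
        have hstrict : StrictAntiOn lam (Icc t0 c2) := by
          apply strictAntiOn_of_deriv_neg (convex_Icc t0 c2) hcont.continuousOn
          intro x hx
          rw [interior_Icc] at hx
          exact hdneg x hx
        have := hstrict ⟨le_refl t0, hc2t0.le⟩ ⟨hc2t0.le, le_refl c2⟩ hc2t0
        rw [hlamt0, hc2v] at this
        exact absurd this (lt_irrefl 0)
      -- deriv lam antitone on [t0, ∞)
      have hanti : AntitoneOn (deriv lam) (Ici t0) := by
        apply antitoneOn_of_deriv_nonpos (convex_Ici t0) hcont'.continuousOn
          hd2.differentiableOn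
        intro x hx
        rw [interior_Ici] at hx
        rw [hode x (le_trans ht0pos.le (le_of_lt hx))]
        exact mul_nonpos_of_nonneg_of_nonpos (pow_nonneg (le_trans ht0pos.le hx.le) m)
          (hneg x hx).le
      -- linear upper bound drives lam to -∞
      set K := deriv lam t0 with hKdef
      have hlin : ∀ t, t0 < t → lam t ≤ K * (t - t0) := by
        intro t ht
        obtain ⟨ξ, hξ, hξv⟩ := exists_hasDerivAt_eq_slope lam (deriv lam) ht
          hcont.continuousOn (fun x _ => (hd1 x).hasDerivAt)
        have h1 : deriv lam ξ ≤ K := hanti (le_refl t0 : t0 ∈ Ici t0) (hξ.1.le : ξ ∈ Ici t0) hξ.1.le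
        rw [hξv, hlamt0] at h1
        have h2 : 0 < t - t0 := by linarith
        calc lam t = (lam t - 0) / (t - t0) * (t - t0) := by field_simp; ring
        _ ≤ K * (t - t0) := by nlinarith [h1]
      set t1 := max B (t0 + 2 / (-K)) with ht1def
      have hKneg : K < 0 := hdlt
      have h2K : 0 < 2 / (-K) := div_pos (by norm_num) (by linarith)
      have ht1 : t0 < t1 := lt_of_lt_of_le (by linarith) (le_max_right _ _)
      have hbound := hlin t1 ht1
      have ht1B : B ≤ t1 := le_max_left _ _
      have hgt := (hB t1 ht1B).1
      have ht1big : t0 + 2 / (-K) ≤ t1 := le_max_right _ _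
      have : K * (t1 - t0) ≤ -2 := by
        have h1 : 2 / (-K) ≤ t1 - t0 := by linarith
        have := mul_le_mul_of_nonpos_left h1 hKneg.le
        calc K * (t1 - t0) ≤ K * (2 / (-K)) := this
        _ = -2 := by
            have hK0 : -K ≠ 0 := by linarith
            field_simp
            simp [hKneg.ne]
      linarith
    -- Case B : deriv lam t0 = 0, Gronwall
    · set c := Real.sqrt (t0 ^ m) with hcdef
      have hc0 : 0 ≤ c := Real.sqrt_nonneg _
      have hcsq : c * c = t0 ^ m := Real.mul_self_sqrt (pow_nonneg ht0pos.le m)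
      set g : ℝ → ℝ := fun t => (deriv lam t + c * lam t) * Real.exp (-(c * t)) with hgdef
      have hgD : ∀ t, HasDerivAt g
          ((deriv (deriv lam) t + c * deriv lam t) * Real.exp (-(c * t))
            + (deriv lam t + c * lam t) * (Real.exp (-(c * t)) * (-c))) t := by
        intro t
        have hexp : HasDerivAt (fun t => Real.exp (-(c * t))) (Real.exp (-(c * t)) * (-c)) t := by
          have h1 : HasDerivAt (fun t : ℝ => -(c * t)) (-c) t := by
            simpa using (hasDerivAt_neg t).const_mul c
          exact h1.exp
        have hin : HasDerivAt (fun t => deriv lam t + c * lam t)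
            (deriv (deriv lam) t + c * deriv lam t) t :=
          (hd2 t).hasDerivAt.add (((hd1 t).hasDerivAt).const_mul c)
        exact hin.mul hexp
      have hganti : AntitoneOn g (Icc 0 t0) := by
        apply antitoneOn_of_deriv_nonpos (convex_Icc 0 t0)
          (fun x _ => ((hgD x).continuousAt).continuousWithinAt)
          (fun x _ => ((hgD x).differentiableAt).differentiableWithinAt)
        intro x hx
        rw [interior_Icc] at hx
        rw [(hgD x).deriv]
        have hodex := hode x hx.1.le
        have hlamx : 0 < lam x := hlampos_before x hx
        have hxm : x ^ m ≤ t0 ^ m := pow_le_pow_left₀ hx.1.le hx.2.le m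
        have hexp : 0 < Real.exp (-(c * x)) := Real.exp_pos _
        have key : (deriv (deriv lam) x + c * deriv lam x) * Real.exp (-(c * x))
            + (deriv lam x + c * lam x) * (Real.exp (-(c * x)) * (-c))
            = (x ^ m - t0 ^ m) * lam x * Real.exp (-(c * x)) := by
          rw [hodex]
          linear_combination (-(lam x * Real.exp (-(c * x)))) * hcsq
        rw [key]
        have : x ^ m - t0 ^ m ≤ 0 := by linarith
        have := mul_nonpos_of_nonpos_of_nonneg (mul_nonpos_of_nonpos_of_nonneg this hlamx.le) hexp.le
        exact this
      have hgt0 : g t0 = 0 := by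
        have hz : deriv lam t0 + c * lam t0 = 0 := by rw [hdeq, hlamt0]; ring
        simp only [hgdef, hz, zero_mul]
      have hgnn : ∀ t ∈ Icc (0:ℝ) t0, 0 ≤ g t := by
        intro t ht
        have := hganti ht ⟨ht0pos.le, le_refl t0⟩ ht.2
        rw [hgt0] at this
        exact this
      have hkey : ∀ t ∈ Icc (0:ℝ) t0, 0 ≤ deriv lam t + c * lam t := by
        intro t ht
        have := hgnn t ht
        simp only [hgdef] at this
        by_contra h
        push_neg at h
        nlinarith [Real.exp_pos (-(c * t))]
      set k : ℝ → ℝ := fun t => lam t * Real.exp (c * t) with hkdef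
      have hkD : ∀ t, HasDerivAt k
          (deriv lam t * Real.exp (c * t) + lam t * (Real.exp (c * t) * c)) t := by
        intro t
        have hexp : HasDerivAt (fun t => Real.exp (c * t)) (Real.exp (c * t) * c) t := by
          have h1 : HasDerivAt (fun t : ℝ => c * t) c t := by
            simpa using (hasDerivAt_id t).const_mul c
          exact h1.exp
        exact (hd1 t).hasDerivAt.mul hexp
      have hkmono : MonotoneOn k (Icc 0 t0) := by
        apply monotoneOn_of_deriv_nonneg (convex_Icc 0 t0)
          (fun x _ => ((hkD x).continuousAt).continuousWithinAt)
          (fun x _ => ((hkD x).differentiableAt).differentiableWithinAt)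
        intro x hx
        rw [interior_Icc] at hx
        rw [(hkD x).deriv]
        have h1 := hkey x ⟨hx.1.le, hx.2.le⟩
        have hexp : 0 < Real.exp (c * x) := Real.exp_pos _
        nlinarith
      have := hkmono ⟨le_refl 0, ht0pos.le⟩ ⟨ht0pos.le, le_refl t0⟩ ht0pos.le
      simp only [hkdef, h0, hlamt0, mul_zero, zero_mul, one_mul, Real.exp_zero] at this
      linarith [this]
  -- Step 2: deriv lam < 0 on (0, ∞)
  have hdneg : ∀ t : ℝ, 0 < t → deriv lam t < 0 := by
    have hmono' : StrictMonoOn (deriv lam) (Ici 0) := by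
      apply strictMonoOn_of_deriv_pos (convex_Ici 0) hcont'.continuousOn
      intro x hx
      rw [interior_Ici] at hx
      rw [hode x hx.le]
      exact mul_pos (pow_pos hx m) (hpos x hx.le)
    intro a ha
    by_contra h
    push_neg at h
    set b := a + 1 with hbdef
    have hab : a < b := by simp [hbdef]
    have hKpos : 0 < deriv lam b := lt_of_le_of_lt h (hmono' ha.le (by positivity : (0:ℝ) ≤ b) hab)
    set K := deriv lam b with hKdef
    have hlin : ∀ t, b < t → lam b + K * (t - b) ≤ lam t := by
      intro t ht
      obtain ⟨ξ, hξ, hξv⟩ := exists_hasDerivAt_eq_slope lam (deriv lam) ht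
        hcont.continuousOn (fun x _ => (hd1 x).hasDerivAt)
      have h1 : K ≤ deriv lam ξ := (hmono' (by positivity : (0:ℝ) ≤ b)
        (le_trans (by positivity) hξ.1.le : (0:ℝ) ≤ ξ) hξ.1).le
      rw [hξv] at h1
      have h2 : 0 < t - b := by linarith
      have h3 : K * (t - b) ≤ (lam t - lam b) / (t - b) * (t - b) :=
        mul_le_mul_of_nonneg_right h1 h2.le
      rw [div_mul_cancel₀ _ (ne_of_gt h2)] at h3
      linarith
    set t2 := max B (max (b + 1) (b + (1 - lam b) / K + 1)) with ht2def
    have ht2b : b < t2 := lt_of_lt_of_le (by linarith) ((le_max_left _ _).trans (le_max_right _ _))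
    have ht2B : B ≤ t2 := le_max_left _ _
    have ht2big : b + (1 - lam b) / K + 1 ≤ t2 := (le_max_right _ _).trans (le_max_right _ _)
    have hlt := (hB t2 ht2B).2
    have hge := hlin t2 ht2b
    have : 1 - lam b + K ≤ K * (t2 - b) := by
      have h1 : (1 - lam b) / K + 1 ≤ t2 - b := by linarith
      have := mul_le_mul_of_nonneg_left h1 hKpos.le
      calc 1 - lam b + K = K * ((1 - lam b) / K + 1) := by field_simp
      _ ≤ K * (t2 - b) := this
    linarith
  refine ⟨hpos, ?_, hdneg⟩
  apply strictAntiOn_of_deriv_neg (convex_Ici 0) hcont.continuousOn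
  intro x hx
  rw [interior_Ici] at hx
  exact hdneg x hx
end

section
/- Let m ∈ ℕ and let λ : [0,∞) → ℝ be a C² function satisfying λ''(t) = t^m λ(t), λ(0) = 1, λ(t) → 0 as t → +∞, with λ > 0 and λ' < 0 on (0,∞). Then for all a ≥ b > 0, λ(a)/λ(b) ≤ (a/b)^{1/2} · exp( (2/(m+2)) b^{(m+2)/2} − (2/(m+2)) a^{(m+2)/2} ). -/
open Real Filter

noncomputable def Fm (m : ℕ) (t : ℝ) : ℝ := 2 / ((m : ℝ) + 2) * t ^ (((m : ℝ) + 2) / 2)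

noncomputable def phim (m : ℕ) (t : ℝ) : ℝ := t ^ ((m : ℝ) / 2) - 1 / (2 * t)

lemma hasDerivAt_Fm (m : ℕ) {t : ℝ} (ht : 0 < t) :
    HasDerivAt (Fm m) (t ^ ((m : ℝ) / 2)) t := by
  have hm : ((m : ℝ) + 2) ≠ 0 := by positivity
  have h := (Real.hasDerivAt_rpow_const (p := ((m : ℝ) + 2) / 2) (Or.inl ht.ne')).const_mul
      (2 / ((m : ℝ) + 2))
  have he : ((m : ℝ) + 2) / 2 - 1 = (m : ℝ) / 2 := by ring
  rw [he] at h
  refine h.congr_deriv ?_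
  field_simp

lemma hasDerivAt_phim (m : ℕ) {t : ℝ} (ht : 0 < t) :
    HasDerivAt (phim m) ((m : ℝ) / 2 * t ^ ((m : ℝ) / 2 - 1) + 1 / (2 * t ^ 2)) t := by
  have h1 : HasDerivAt (fun t : ℝ => t ^ ((m : ℝ) / 2)) ((m : ℝ) / 2 * t ^ ((m : ℝ) / 2 - 1)) t :=
    Real.hasDerivAt_rpow_const (Or.inl ht.ne')
  have hlin : HasDerivAt (fun t : ℝ => 2 * t) 2 t := by
    simpa using (hasDerivAt_id t).const_mul (2 : ℝ)
  have h2 : HasDerivAt (fun t : ℝ => (2 * t)⁻¹) (-2 / (2 * t) ^ 2) t := hlin.inv (by positivity)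
  have h2' : HasDerivAt (fun t : ℝ => 1 / (2 * t)) (-(1 / (2 * t ^ 2))) t := by
    simp only [one_div]
    convert h2 using 1
    field_simp
  have h := h1.sub h2'
  refine h.congr_deriv ?_
  ring

lemma hasDerivAt_Eplus (m : ℕ) {t : ℝ} (ht : 0 < t) :
    HasDerivAt (fun t : ℝ => t ^ ((1 : ℝ) / 2) * Real.exp (-(Fm m t)))
      (-(phim m t) * (t ^ ((1 : ℝ) / 2) * Real.exp (-(Fm m t)))) t := by
  have h1 : HasDerivAt (fun t : ℝ => t ^ ((1 : ℝ) / 2)) ((1 : ℝ) / 2 * t ^ ((1 : ℝ) / 2 - 1)) t :=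
    Real.hasDerivAt_rpow_const (Or.inl ht.ne')
  have h2 := ((hasDerivAt_Fm m ht).neg).exp
  have h := h1.mul h2
  refine h.congr_deriv ?_
  simp only [Pi.neg_apply]
  unfold phim
  rw [Real.rpow_sub ht, Real.rpow_one]
  have h3 := ht.ne'
  field_simp
  ring

lemma hasDerivAt_Einv (m : ℕ) {t : ℝ} (ht : 0 < t) :
    HasDerivAt (fun t : ℝ => t ^ (-(1 : ℝ) / 2) * Real.exp (Fm m t))
      (phim m t * (t ^ (-(1 : ℝ) / 2) * Real.exp (Fm m t))) t := by
  have h1 : HasDerivAt (fun t : ℝ => t ^ (-(1 : ℝ) / 2)) ((-(1 : ℝ) / 2) * t ^ (-(1 : ℝ) / 2 - 1)) t :=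
    Real.hasDerivAt_rpow_const (Or.inl ht.ne')
  have h2 := (hasDerivAt_Fm m ht).exp
  have h := h1.mul h2
  refine h.congr_deriv ?_
  unfold phim
  rw [Real.rpow_sub ht, Real.rpow_one]
  have h3 := ht.ne'
  field_simp
  ring

lemma keyalg (m : ℕ) {t : ℝ} (ht : 0 < t) :
    (t : ℝ) ^ m + ((m : ℝ) / 2 * t ^ ((m : ℝ) / 2 - 1) + 1 / (2 * t ^ 2)) - (phim m t) ^ 2
      = ((m : ℝ) / 2 + 1) * t ^ ((m : ℝ) / 2 - 1) + 1 / (4 * t ^ 2) := by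
  unfold phim
  have h1 : (t ^ ((m : ℝ) / 2)) ^ 2 = t ^ m := by
    rw [← Real.rpow_natCast (t ^ ((m : ℝ) / 2)) 2, ← Real.rpow_mul ht.le,
      show ((m : ℝ) / 2 * (2 : ℕ)) = ((m : ℕ) : ℝ) by push_cast; ring, Real.rpow_natCast]
  have h2 : t ^ ((m : ℝ) / 2) / t = t ^ ((m : ℝ) / 2 - 1) := by
    rw [Real.rpow_sub ht, Real.rpow_one]
  rw [← h1, ← h2]
  have h3 := ht.ne'
  field_simp
  ring
theorem stmt3 (m : ℕ) (lam : ℝ → ℝ)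
    (hC2 : ContDiff ℝ 2 lam)
    (hode : ∀ t : ℝ, 0 ≤ t → deriv (deriv lam) t = t ^ m * lam t)
    (h0 : lam 0 = 1)
    (hlim : Filter.Tendsto lam Filter.atTop (nhds 0))
    (hpos : ∀ t : ℝ, 0 ≤ t → 0 < lam t)
    (hneg : ∀ t : ℝ, 0 < t → deriv lam t < 0) :
    ∀ a b : ℝ, 0 < b → b ≤ a →
      lam a / lam b ≤ (a / b) ^ ((1 : ℝ) / 2) *
        Real.exp (2 / ((m : ℝ) + 2) * b ^ (((m : ℝ) + 2) / 2)
          - 2 / ((m : ℝ) + 2) * a ^ (((m : ℝ) + 2) / 2)) := by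
  intro a b hb hba
  have ha : 0 < a := lt_of_lt_of_le hb hba
  -- differentiability
  have hdiff : Differentiable ℝ lam := hC2.differentiable (by norm_num)
  have hdiff' : Differentiable ℝ (deriv lam) := by
    have h2 : ContDiff ℝ (1 + 1) lam := by
      convert hC2 using 2
      exact one_add_one_eq_two
    exact (contDiff_succ_iff_deriv.mp h2).2.2.differentiable one_ne_zero
  -- lam is antitone on [0, ∞)
  have hanti : ∀ s t : ℝ, 0 < s → s ≤ t → lam t ≤ lam s := by
    intro s t hs hst
    rcases eq_or_lt_of_le hst with rfl | hlt
    · exact le_refl _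
    have hA : StrictAntiOn lam (Set.Ici (0 : ℝ)) := by
      apply strictAntiOn_of_deriv_neg (convex_Ici 0) hC2.continuous.continuousOn
      intro x hx
      rw [interior_Ici] at hx
      exact hneg x hx
    exact (hA (Set.mem_Ici.mpr hs.le) (Set.mem_Ici.mpr (hs.le.trans hst)) hlt).le
  -- derivative of g = lam' + phim * lam
  have hg' : ∀ t : ℝ, 0 < t →
      HasDerivAt (fun s => deriv lam s + phim m s * lam s)
        ((t : ℝ) ^ m * lam t
          + (((m : ℝ) / 2 * t ^ ((m : ℝ) / 2 - 1) + 1 / (2 * t ^ 2)) * lam t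
            + phim m t * deriv lam t)) t := by
    intro t ht
    have h1 : HasDerivAt (deriv lam) ((t : ℝ) ^ m * lam t) t := by
      have h := (hdiff' t).hasDerivAt
      rwa [hode t ht.le] at h
    exact h1.add ((hasDerivAt_phim m ht).mul (hdiff t).hasDerivAt)
  -- H and its monotonicity
  set Ep : ℝ → ℝ := fun t => t ^ ((1 : ℝ) / 2) * Real.exp (-(Fm m t)) with hEp
  have hEp_pos : ∀ t : ℝ, 0 < t → 0 < Ep t := fun t ht =>
    mul_pos (Real.rpow_pos_of_pos ht _) (Real.exp_pos _)
  set H : ℝ → ℝ := fun t => (deriv lam t + phim m t * lam t) * Ep t with hHdef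
  have hH : ∀ t : ℝ, 0 < t →
      HasDerivAt H
        ((((m : ℝ) / 2 + 1) * t ^ ((m : ℝ) / 2 - 1) + 1 / (4 * t ^ 2)) * lam t * Ep t) t := by
    intro t ht
    have h := (hg' t ht).mul (hasDerivAt_Eplus m ht)
    refine h.congr_deriv ?_
    have hδ := keyalg m ht
    rw [← hδ]
    simp only [hEp]
    ring
  have hmono : StrictMonoOn H (Set.Ioi (0 : ℝ)) := by
    apply strictMonoOn_of_deriv_pos (convex_Ioi 0)
    · intro t ht
      exact (hH t ht).continuousAt.continuousWithinAt
    · intro t ht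
      rw [interior_Ioi] at ht
      rw [(hH t ht).deriv]
      have h1 : 0 < ((m : ℝ) / 2 + 1) * t ^ ((m : ℝ) / 2 - 1) + 1 / (4 * t ^ 2) := by
        have := Real.rpow_pos_of_pos ht ((m : ℝ) / 2 - 1)
        positivity
      exact mul_pos (mul_pos h1 (hpos t ht.le)) (hEp_pos t ht)
  -- key claim: g ≤ 0 on (0, ∞)
  have key1 : ∀ t : ℝ, 0 < t → deriv lam t + phim m t * lam t ≤ 0 := by
    intro t0 ht0
    by_contra hcon
    push_neg at hcon
    have hcpos : 0 < H t0 := mul_pos hcon (hEp_pos t0 ht0)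
    set c2 : ℝ := 2 / ((m : ℝ) + 2) with hc2def
    have hc2 : 0 < c2 := by positivity
    have htend : Tendsto (fun t : ℝ => Real.exp (c2 * t) / t ^ (((m : ℝ) + 1) / 2))
        atTop atTop := tendsto_exp_mul_div_rpow_atTop _ c2 hc2
    obtain ⟨T, hT1, hT2⟩ :
        ∃ T : ℝ, max t0 1 < T ∧ lam t0 / H t0 < Real.exp (c2 * T) / T ^ (((m : ℝ) + 1) / 2) := by
      have := (eventually_gt_atTop (max t0 1)).and (htend.eventually_gt_atTop (lam t0 / H t0))
      obtain ⟨T, h1, h2⟩ := this.exists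
      exact ⟨T, h1, h2⟩
    have hTt0 : t0 < T := lt_of_le_of_lt (le_max_left _ _) hT1
    have hT1' : (1 : ℝ) < T := lt_of_le_of_lt (le_max_right _ _) hT1
    have hTpos : 0 < T := lt_trans zero_lt_one hT1'
    -- H t0 < H T
    have hHT : H t0 < H T := hmono (Set.mem_Ioi.mpr ht0) (Set.mem_Ioi.mpr hTpos) hTt0
    -- bound on g T
    have hgT : deriv lam T + phim m T * lam T ≤ T ^ ((m : ℝ) / 2) * lam t0 := by
      have h1 : deriv lam T < 0 := hneg T hTpos
      have h2 : phim m T ≤ T ^ ((m : ℝ) / 2) := by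
        unfold phim
        have : 0 < 1 / (2 * T) := by positivity
        linarith
      have h3 : lam T ≤ lam t0 := hanti t0 T ht0 hTt0.le
      have h4 : 0 < lam T := hpos T hTpos.le
      have h5 : 0 ≤ T ^ ((m : ℝ) / 2) := (Real.rpow_pos_of_pos hTpos _).le
      nlinarith
    have hHT2 : H T ≤ T ^ ((m : ℝ) / 2) * lam t0 * Ep T :=
      mul_le_mul_of_nonneg_right hgT (hEp_pos T hTpos).le
    -- multiply through by exp (Fm m T)
    have hEpFm : Ep T * Real.exp (Fm m T) = T ^ ((1 : ℝ) / 2) := by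
      simp only [hEp]
      rw [mul_assoc, ← Real.exp_add]
      simp
    have hmain : H t0 * Real.exp (Fm m T) < T ^ (((m : ℝ) + 1) / 2) * lam t0 := by
      have h1 : H t0 * Real.exp (Fm m T) < T ^ ((m : ℝ) / 2) * lam t0 * (Ep T * Real.exp (Fm m T)) := by
        have := mul_lt_mul_of_pos_right (lt_of_lt_of_le hHT hHT2) (Real.exp_pos (Fm m T))
        linarith [this]
      rw [hEpFm] at h1
      have h2 : T ^ ((m : ℝ) / 2) * T ^ ((1 : ℝ) / 2) = T ^ (((m : ℝ) + 1) / 2) := by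
        rw [← Real.rpow_add hTpos]
        congr 1
        ring
      calc H t0 * Real.exp (Fm m T) < T ^ ((m : ℝ) / 2) * lam t0 * T ^ ((1 : ℝ) / 2) := h1
        _ = T ^ (((m : ℝ) + 1) / 2) * lam t0 := by rw [← h2]; ring
    -- exp (c2 * T) ≤ exp (Fm m T)
    have hFmT : c2 * T ≤ Fm m T := by
      unfold Fm
      rw [← hc2def]
      have h1 : T ^ (1 : ℝ) ≤ T ^ (((m : ℝ) + 2) / 2) := by
        apply Real.rpow_le_rpow_of_exponent_le hT1'.le
        have : (0 : ℝ) ≤ (m : ℝ) := Nat.cast_nonneg m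
        linarith
      rw [Real.rpow_one] at h1
      exact mul_le_mul_of_nonneg_left h1 hc2.le
    have hexp : Real.exp (c2 * T) ≤ Real.exp (Fm m T) := Real.exp_le_exp.mpr hFmT
    -- contradiction
    have hTpow : 0 < T ^ (((m : ℝ) + 1) / 2) := Real.rpow_pos_of_pos hTpos _
    rw [div_lt_div_iff₀ hcpos hTpow] at hT2
    have : H t0 * Real.exp (c2 * T) ≤ H t0 * Real.exp (Fm m T) :=
      mul_le_mul_of_nonneg_left hexp hcpos.le
    have hl0 : 0 < lam t0 := hpos t0 ht0.le
    nlinarith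
  -- the decreasing quantity L
  set Ei : ℝ → ℝ := fun t => t ^ (-(1 : ℝ) / 2) * Real.exp (Fm m t) with hEi
  have hEi_pos : ∀ t : ℝ, 0 < t → 0 < Ei t := fun t ht =>
    mul_pos (Real.rpow_pos_of_pos ht _) (Real.exp_pos _)
  have hL : ∀ t : ℝ, 0 < t →
      HasDerivAt (fun s => lam s * Ei s) ((deriv lam t + phim m t * lam t) * Ei t) t := by
    intro t ht
    have h := ((hdiff t).hasDerivAt).mul (hasDerivAt_Einv m ht)
    refine h.congr_deriv ?_
    simp only [hEi]
    ring
  have hLanti : AntitoneOn (fun s => lam s * Ei s) (Set.Ioi (0 : ℝ)) := by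
    apply antitoneOn_of_deriv_nonpos (convex_Ioi 0)
    · intro t ht
      exact (hL t ht).continuousAt.continuousWithinAt
    · intro t ht
      rw [interior_Ioi] at ht
      exact (hL t ht).differentiableAt.differentiableWithinAt
    · intro t ht
      rw [interior_Ioi] at ht
      rw [(hL t ht).deriv]
      exact mul_nonpos_of_nonpos_of_nonneg (key1 t ht) (hEi_pos t ht).le
  have hfin : lam a * Ei a ≤ lam b * Ei b :=
    hLanti (Set.mem_Ioi.mpr hb) (Set.mem_Ioi.mpr ha) hba
  -- final algebra
  have hgoal : lam a / lam b ≤ (a / b) ^ ((1 : ℝ) / 2) * Real.exp (Fm m b - Fm m a) := by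
    have hA : (0 : ℝ) < a ^ ((1 : ℝ) / 2) := Real.rpow_pos_of_pos ha _
    have hB : (0 : ℝ) < b ^ ((1 : ℝ) / 2) := Real.rpow_pos_of_pos hb _
    have hEa : (0 : ℝ) < Real.exp (Fm m a) := Real.exp_pos _
    have hEb : (0 : ℝ) < Real.exp (Fm m b) := Real.exp_pos _
    have hna : a ^ (-(1 : ℝ) / 2) = (a ^ ((1 : ℝ) / 2))⁻¹ := by
      rw [show (-(1 : ℝ) / 2) = -((1 : ℝ) / 2) by ring, Real.rpow_neg ha.le]
    have hnb : b ^ (-(1 : ℝ) / 2) = (b ^ ((1 : ℝ) / 2))⁻¹ := by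
      rw [show (-(1 : ℝ) / 2) = -((1 : ℝ) / 2) by ring, Real.rpow_neg hb.le]
    simp only [hEi, hna, hnb] at hfin
    rw [div_le_iff₀ (hpos b hb.le), Real.div_rpow ha.le hb.le, Real.exp_sub]
    have step : lam a ≤ lam b * ((b ^ ((1 : ℝ) / 2))⁻¹ * Real.exp (Fm m b))
        * (a ^ ((1 : ℝ) / 2) * (Real.exp (Fm m a))⁻¹) := by
      calc lam a = lam a * ((a ^ ((1 : ℝ) / 2))⁻¹ * Real.exp (Fm m a))
            * (a ^ ((1 : ℝ) / 2) * (Real.exp (Fm m a))⁻¹) := by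
              field_simp
        _ ≤ lam b * ((b ^ ((1 : ℝ) / 2))⁻¹ * Real.exp (Fm m b))
            * (a ^ ((1 : ℝ) / 2) * (Real.exp (Fm m a))⁻¹) := by
              apply mul_le_mul_of_nonneg_right hfin
              positivity
    calc lam a ≤ lam b * ((b ^ ((1 : ℝ) / 2))⁻¹ * Real.exp (Fm m b))
          * (a ^ ((1 : ℝ) / 2) * (Real.exp (Fm m a))⁻¹) := step
      _ = a ^ ((1 : ℝ) / 2) / b ^ ((1 : ℝ) / 2) * (Real.exp (Fm m b) / Real.exp (Fm m a)) * lam b := by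
          field_simp
  exact hgoal
end

section
/- Let m ∈ ℕ and let λ : [0,∞) → ℝ be a C² function satisfying λ''(t) = t^m λ(t), λ(0) = 1, λ(+∞) = 0, with λ > 0 and λ' < 0 on (0,∞). Then there exists a constant C > 1 such that |λ'(t)| / (λ(t) t^{m/2}) ≥ 1/C for all t > 0, and |λ'(t)| / (λ(t) t^{m/2}) ≤ C for all t ≥ 1. -/
open Real

set_option maxHeartbeats 1000000 in
theorem stmt4 (m : ℕ) (lam : ℝ → ℝ)
    (hC2 : ContDiff ℝ 2 lam)
    (hode : ∀ t : ℝ, 0 ≤ t → deriv (deriv lam) t = t ^ m * lam t)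
    (h0 : lam 0 = 1)
    (hlim : Filter.Tendsto lam Filter.atTop (nhds 0))
    (hpos : ∀ t : ℝ, 0 ≤ t → 0 < lam t)
    (hneg : ∀ t : ℝ, 0 < t → deriv lam t < 0) :
    ∃ C : ℝ, 1 < C ∧
      (∀ t : ℝ, 0 < t → 1 / C ≤ |deriv lam t| / (lam t * t ^ ((m : ℝ) / 2))) ∧
      (∀ t : ℝ, 1 ≤ t → |deriv lam t| / (lam t * t ^ ((m : ℝ) / 2)) ≤ C) := by
  -- basic differentiability
  have hdd : Differentiable ℝ lam ∧ Differentiable ℝ (deriv lam) := by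
    have h : ContDiff ℝ ((1:ℕ∞)+1) lam := by exact_mod_cast hC2
    rw [contDiff_succ_iff_deriv] at h
    exact ⟨h.1, h.2.2.differentiable (by simp)⟩
  obtain ⟨hd1, hd2⟩ := hdd
  set v : ℝ → ℝ := fun t => deriv lam t / lam t with hv_def
  clear_value v
  have hvd : ∀ t : ℝ, 0 < t → HasDerivAt v (t ^ m - (v t) ^ 2) t := by
    intro t ht
    have hlt : lam t ≠ 0 := (hpos t ht.le).ne'
    have h1 : HasDerivAt lam (deriv lam t) t := (hd1 t).hasDerivAt
    have h2 : HasDerivAt (deriv lam) (t ^ m * lam t) t := by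
      have h := (hd2 t).hasDerivAt
      rwa [hode t ht.le] at h
    have h3 := h2.div h1 hlt
    convert h3 using 1
    · rfl
    · rfl
    · rw [hv_def]; rfl
    · rw [hv_def]
      field_simp
  have hvneg : ∀ t : ℝ, 0 < t → v t < 0 := by
    intro t ht
    simp only [hv_def]
    exact div_neg_of_neg_of_pos (hneg t ht) (hpos t ht.le)
  have hsq : ∀ t : ℝ, 0 < t → (deriv lam t) ^ 2 = (v t) ^ 2 * (lam t) ^ 2 := by
    intro t ht
    have hlt : lam t ≠ 0 := (hpos t ht.le).ne'
    rw [hv_def]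
    field_simp
  -- PART A : t^m ≤ (v t)^2 for all t > 0
  have keyA : ∀ t : ℝ, 0 < t → (t : ℝ) ^ m ≤ (v t) ^ 2 := by
    by_contra hcon
    push_neg at hcon
    obtain ⟨t1, ht1, hlt⟩ := hcon
    set g : ℝ → ℝ := fun t => (deriv lam t) ^ 2 - t ^ m * (lam t) ^ 2 with hg_def
    clear_value g
    have hgdiff : Differentiable ℝ g := by
      rw [hg_def]
      exact (hd2.pow 2).sub ((differentiable_pow m).mul (hd1.pow 2))
    have hgd : ∀ t : ℝ, 0 < t →
        HasDerivAt g (-((m : ℝ) * t ^ (m - 1) * (lam t) ^ 2)) t := by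
      intro t ht
      have h1 : HasDerivAt lam (deriv lam t) t := (hd1 t).hasDerivAt
      have h2 : HasDerivAt (deriv lam) (t ^ m * lam t) t := by
        have h := (hd2 t).hasDerivAt
        rwa [hode t ht.le] at h
      have h3 : HasDerivAt (fun s : ℝ => s ^ m) ((m : ℝ) * t ^ (m - 1)) t :=
        hasDerivAt_pow m t
      have h4 := (h2.pow 2).sub (h3.mul (h1.pow 2))
      convert h4 using 1
      · rfl
      · rfl
      · rw [hg_def]; rfl
      simp only [Pi.pow_apply]
      push_cast
      ring
    have hganti : AntitoneOn g (Set.Ici t1) := by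
      apply antitoneOn_of_deriv_nonpos (convex_Ici t1)
        hgdiff.continuous.continuousOn hgdiff.differentiableOn
      intro x hx
      rw [interior_Ici] at hx
      have hx0 : 0 < x := ht1.trans hx
      rw [(hgd x hx0).deriv]
      have : (0:ℝ) ≤ (m : ℝ) * x ^ (m - 1) * (lam x) ^ 2 := by positivity
      linarith
    have hg1 : g t1 < 0 := by
      have h2 := hsq t1 ht1
      have h3 : (0 : ℝ) < (lam t1) ^ 2 := pow_pos (hpos t1 ht1.le) 2
      simp only [hg_def]
      nlinarith
    have hglt : ∀ t : ℝ, t1 ≤ t → g t < 0 := fun t ht =>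
      lt_of_le_of_lt (hganti (Set.self_mem_Ici) ht ht) hg1
    have hvsq : ∀ t : ℝ, t1 ≤ t → (v t) ^ 2 < t ^ m := by
      intro t ht
      have h0t : 0 < t := lt_of_lt_of_le ht1 ht
      have h2 := hsq t h0t
      have h3 : (0 : ℝ) < (lam t) ^ 2 := pow_pos (hpos t h0t.le) 2
      have h4 := hglt t ht
      simp only [hg_def] at h4
      nlinarith
    have hvmono : MonotoneOn v (Set.Ici t1) := by
      apply monotoneOn_of_deriv_nonneg (convex_Ici t1)
      · exact fun x hx => ((hvd x (lt_of_lt_of_le ht1 hx)).continuousAt).continuousWithinAt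
      · intro x hx
        rw [interior_Ici] at hx
        exact ((hvd x (ht1.trans hx)).differentiableAt).differentiableWithinAt
      · intro x hx
        rw [interior_Ici] at hx
        rw [(hvd x (ht1.trans hx)).deriv]
        have := hvsq x hx.le
        linarith
    set t2 : ℝ := max t1 1 with ht2_def
    clear_value t2
    have ht12 : t1 ≤ t2 := by rw [ht2_def]; exact le_max_left _ _
    have ht21 : (1:ℝ) ≤ t2 := by rw [ht2_def]; exact le_max_right _ _
    have ht20 : (0:ℝ) < t2 := lt_of_lt_of_le one_pos ht21
    set δ : ℝ := t2 ^ m - (v t2) ^ 2 with hδ_def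
    clear_value δ
    have hδpos : 0 < δ := by
      have := hvsq t2 ht12
      simp only [hδ_def]
      linarith
    have hderge : ∀ t : ℝ, t2 ≤ t → δ ≤ t ^ m - (v t) ^ 2 := by
      intro t ht
      have h0t : 0 < t := lt_of_lt_of_le ht20 ht
      have h1 : t2 ^ m ≤ t ^ m := pow_le_pow_left₀ ht20.le ht m
      have h2 : v t2 ≤ v t := hvmono (Set.mem_Ici.mpr ht12) (Set.mem_Ici.mpr (ht12.trans ht)) ht
      have h3 : v t < 0 := hvneg t h0t
      simp only [hδ_def]
      nlinarith
    have hφd : ∀ x : ℝ, 0 < x →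
        HasDerivAt (fun s => v s - δ * s) (x ^ m - (v x) ^ 2 - δ) x := by
      intro x hx
      have h := (hvd x hx).sub ((hasDerivAt_id x).const_mul δ)
      simpa [Pi.sub_def] using h
    have hφmono : MonotoneOn (fun s => v s - δ * s) (Set.Ici t2) := by
      apply monotoneOn_of_deriv_nonneg (convex_Ici t2)
      · exact fun x hx => ((hφd x (lt_of_lt_of_le ht20 hx)).continuousAt).continuousWithinAt
      · intro x hx
        rw [interior_Ici] at hx
        exact ((hφd x (ht20.trans hx)).differentiableAt).differentiableWithinAt
      · intro x hx
        rw [interior_Ici] at hx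
        rw [(hφd x (ht20.trans hx)).deriv]
        have := hderge x hx.le
        linarith
    set T : ℝ := t2 + (1 + |v t2|) / δ with hT_def
    clear_value T
    have hT2 : t2 ≤ T := by
      have : 0 ≤ (1 + |v t2|) / δ := by positivity
      simp only [hT_def]; linarith
    have h1 := hφmono (Set.self_mem_Ici) (Set.mem_Ici.mpr hT2) hT2
    have h2 : v T < 0 := hvneg T (lt_of_lt_of_le ht20 hT2)
    have h3 : δ * (T - t2) = 1 + |v t2| := by
      simp only [hT_def]
      field_simp
      ring
    have h4 : -|v t2| ≤ v t2 := neg_abs_le _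
    simp only at h1
    nlinarith
  -- rpow facts
  have hp_sq : ∀ t : ℝ, 0 ≤ t → (t ^ ((m : ℝ) / 2)) ^ 2 = t ^ m := by
    intro t ht
    rw [← Real.rpow_natCast (t ^ ((m : ℝ) / 2)) 2, ← Real.rpow_mul ht]
    norm_num [Real.rpow_natCast]
  have hp_pos : ∀ t : ℝ, 0 < t → 0 < t ^ ((m : ℝ) / 2) :=
    fun t ht => Real.rpow_pos_of_pos ht _
  have hp_one : ∀ t : ℝ, 1 ≤ t → 1 ≤ t ^ ((m : ℝ) / 2) :=
    fun t ht => Real.one_le_rpow ht (by positivity)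
  have hp_d : ∀ t : ℝ, 0 < t →
      HasDerivAt (fun s : ℝ => s ^ ((m : ℝ) / 2)) (((m : ℝ) / 2) * t ^ ((m : ℝ) / 2 - 1)) t :=
    fun t ht => Real.hasDerivAt_rpow_const (Or.inl ht.ne')
  -- the constant
  set C : ℝ := (m : ℝ) + 2 + |v 1| with hC_def
  clear_value C
  have hCm : (m : ℝ) + 2 ≤ C := by
    have := abs_nonneg (v 1); simp only [hC_def]; linarith
  have hC2' : (2 : ℝ) ≤ C := by
    have : (0:ℝ) ≤ (m:ℝ) := Nat.cast_nonneg m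
    linarith
  have hC1 : (1 : ℝ) < C := by linarith
  have hC0 : (0 : ℝ) < C := by linarith
  -- PART B : -(v t) ≤ C * t^(m/2) for t ≥ 1
  have keyB : ∀ t : ℝ, 1 ≤ t → -(v t) ≤ C * t ^ ((m : ℝ) / 2) := by
    by_contra hcon
    push_neg at hcon
    obtain ⟨t1, ht1, hlt⟩ := hcon
    have ht10 : (0:ℝ) < t1 := lt_of_lt_of_le one_pos ht1
    set w : ℝ → ℝ := fun t => v t + C * t ^ ((m : ℝ) / 2) with hw_def
    clear_value w
    have hw1 : w t1 < 0 := by simp only [hw_def]; linarith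
    have hwd : ∀ t : ℝ, 0 < t →
        HasDerivAt w (t ^ m - (v t) ^ 2 + C * (((m : ℝ) / 2) * t ^ ((m : ℝ) / 2 - 1))) t := by
      intro t ht
      rw [hw_def]
      exact (hvd t ht).add ((hp_d t ht).const_mul C)
    have hwcont : ContinuousOn w (Set.Ici t1) :=
      fun x hx => ((hwd x (lt_of_lt_of_le ht10 hx)).continuousAt).continuousWithinAt
    -- derivative of w negative where w ≤ 0 and t ≥ 1
    have hwd_neg : ∀ x : ℝ, 1 ≤ x → w x ≤ 0 →
        x ^ m - (v x) ^ 2 + C * (((m : ℝ) / 2) * x ^ ((m : ℝ) / 2 - 1)) < 0 := by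
      intro x hx hwx
      have hx0 : (0:ℝ) < x := lt_of_lt_of_le one_pos hx
      have hpx : 0 < x ^ ((m : ℝ) / 2) := hp_pos x hx0
      have hvx : v x ≤ -(C * x ^ ((m : ℝ) / 2)) := by simp only [hw_def] at hwx; linarith
      have h1 : C ^ 2 * x ^ m ≤ (v x) ^ 2 := by
        have hs := hp_sq x hx0.le
        have hcp : (0:ℝ) < C * x ^ ((m : ℝ) / 2) := mul_pos hC0 hpx
        have hprod : 0 ≤ (-(v x) - C * x ^ ((m : ℝ) / 2)) * (-(v x) + C * x ^ ((m : ℝ) / 2)) :=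
          mul_nonneg (by linarith) (by linarith)
        have hs2 : C ^ 2 * (x ^ ((m : ℝ) / 2)) ^ 2 = C ^ 2 * x ^ m := by rw [hs]
        nlinarith [hprod, hs2]
      have h2 : x ^ ((m : ℝ) / 2 - 1) ≤ x ^ m := by
        have := Real.rpow_le_rpow_of_exponent_le hx
          (show (m : ℝ) / 2 - 1 ≤ (m : ℝ) by linarith [Nat.cast_nonneg (α := ℝ) m])
        rwa [Real.rpow_natCast] at this
      have hxm : (0:ℝ) < x ^ m := pow_pos hx0 m
      have h3 : C * ((m : ℝ) / 2) * x ^ ((m : ℝ) / 2 - 1) ≤ C * ((m : ℝ) / 2) * x ^ m :=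
        mul_le_mul_of_nonneg_left h2 (by positivity)
      have hcoef : 1 - C ^ 2 + C * ((m : ℝ) / 2) < 0 := by nlinarith [Nat.cast_nonneg (α := ℝ) m]
      have h4 : (1 - C ^ 2 + C * ((m : ℝ) / 2)) * x ^ m < 0 := mul_neg_of_neg_of_pos hcoef hxm
      have h5 : (1 - C ^ 2 + C * ((m : ℝ) / 2)) * x ^ m
          = x ^ m - C ^ 2 * x ^ m + C * ((m : ℝ) / 2) * x ^ m := by ring
      have h6 : C * ((m : ℝ) / 2 * x ^ ((m : ℝ) / 2 - 1)) = C * ((m : ℝ) / 2) * x ^ ((m : ℝ) / 2 - 1) := by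
        ring
      rw [h6]
      linarith
    -- forward invariance: w < 0 on [t1, ∞)
    have hwneg : ∀ t : ℝ, t1 ≤ t → w t < 0 := by
      by_contra hS
      push_neg at hS
      obtain ⟨s, hs1, hs2⟩ := hS
      set S : Set ℝ := Set.Ici t1 ∩ w ⁻¹' Set.Ici 0 with hS_def
      have hSclosed : IsClosed S :=
        hwcont.preimage_isClosed_of_isClosed isClosed_Ici isClosed_Ici
      have hSne : S.Nonempty := ⟨s, hs1, hs2⟩
      have hSbdd : BddBelow S := ⟨t1, fun x hx => hx.1⟩
      set t0 : ℝ := sInf S with ht0_def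
      clear_value t0
      have ht0S : t0 ∈ S := by rw [ht0_def]; exact hSclosed.csInf_mem hSne hSbdd
      have ht01 : t1 ≤ t0 := ht0S.1
      have ht0w : 0 ≤ w t0 := ht0S.2
      have ht0lt : t1 < t0 := by
        rcases eq_or_lt_of_le ht01 with h | h
        · exfalso; rw [← h] at ht0w; linarith
        · exact h
      have hbelow : ∀ x : ℝ, x ∈ Set.Ico t1 t0 → w x < 0 := by
        intro x hx
        by_contra hge
        push_neg at hge
        have : x ∈ S := ⟨hx.1, hge⟩
        have := csInf_le hSbdd this
        rw [← ht0_def] at this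
        linarith [hx.2]
      have hanti : StrictAntiOn w (Set.Icc t1 t0) := by
        apply strictAntiOn_of_deriv_neg (convex_Icc t1 t0)
          (hwcont.mono (Set.Icc_subset_Ici_self))
        intro x hx
        rw [interior_Icc] at hx
        have hx0 : 0 < x := lt_of_lt_of_le ht10 hx.1.le
        rw [(hwd x hx0).deriv]
        exact hwd_neg x (ht1.trans hx.1.le)
          (hbelow x ⟨hx.1.le, hx.2⟩).le
      have := hanti (Set.left_mem_Icc.mpr ht01) (Set.right_mem_Icc.mpr ht01) ht0lt
      linarith
    -- blow-up of 1/v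
    have hvle : ∀ t : ℝ, t1 ≤ t → v t < -C := by
      intro t ht
      have h0t : (0:ℝ) < t := lt_of_lt_of_le ht10 ht
      have h := hwneg t ht
      simp only [hw_def] at h
      have hp1 : 1 ≤ t ^ ((m : ℝ) / 2) := hp_one t (ht1.trans ht)
      nlinarith
    have hvne : ∀ t : ℝ, t1 ≤ t → v t ≠ 0 := fun t ht => ne_of_lt (by linarith [hvle t ht])
    have hud : ∀ t : ℝ, t1 ≤ t →
        HasDerivAt (fun s => (v s)⁻¹) (-(t ^ m - (v t) ^ 2) / (v t) ^ 2) t :=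
      fun t ht => (hvd t (lt_of_lt_of_le ht10 ht)).inv (hvne t ht)
    have hud_ge : ∀ t : ℝ, t1 ≤ t → (1:ℝ)/2 ≤ -(t ^ m - (v t) ^ 2) / (v t) ^ 2 := by
      intro t ht
      have h0t : (0:ℝ) < t := lt_of_lt_of_le ht10 ht
      have hw := hwneg t ht
      simp only [hw_def] at hw
      have hpx : 0 < t ^ ((m : ℝ) / 2) := hp_pos t h0t
      have hs := hp_sq t h0t.le
      have h1 : C ^ 2 * t ^ m ≤ (v t) ^ 2 := by
        have hcp : (0:ℝ) < C * t ^ ((m : ℝ) / 2) := mul_pos hC0 hpx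
        have hprod : 0 ≤ (-(v t) - C * t ^ ((m : ℝ) / 2)) * (-(v t) + C * t ^ ((m : ℝ) / 2)) :=
          mul_nonneg (by linarith) (by linarith)
        have hs2 : C ^ 2 * (t ^ ((m : ℝ) / 2)) ^ 2 = C ^ 2 * t ^ m := by rw [hs]
        nlinarith [hprod, hs2]
      have hv2 : (0:ℝ) < (v t) ^ 2 := by
        have h := hvle t ht; nlinarith
      rw [le_div_iff₀ hv2]
      have hxm : (0:ℝ) < t ^ m := pow_pos h0t m
      have h6 : 4 * t ^ m ≤ C ^ 2 * t ^ m := by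
        have hC4 : (4:ℝ) ≤ C ^ 2 := by nlinarith
        exact mul_le_mul_of_nonneg_right hC4 hxm.le
      linarith
    have hud2 : ∀ x : ℝ, t1 ≤ x →
        HasDerivAt (fun s => (v s)⁻¹ - (1/2) * s)
          (-(x ^ m - (v x) ^ 2) / (v x) ^ 2 - 1/2) x := by
      intro x hx
      have h := (hud x hx).sub ((hasDerivAt_id x).const_mul (1/2))
      simpa [Pi.sub_def] using h
    have hψmono : MonotoneOn (fun s => (v s)⁻¹ - (1/2) * s) (Set.Ici t1) := by
      apply monotoneOn_of_deriv_nonneg (convex_Ici t1)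
      · intro x hx
        exact ((hud2 x hx).continuousAt).continuousWithinAt
      · intro x hx
        rw [interior_Ici] at hx
        exact ((hud2 x hx.le).differentiableAt).differentiableWithinAt
      · intro x hx
        rw [interior_Ici] at hx
        rw [(hud2 x hx.le).deriv]
        have := hud_ge x hx.le
        linarith
    have hT : t1 ≤ t1 + 4 := by linarith
    have h1 := hψmono Set.self_mem_Ici (Set.mem_Ici.mpr hT) hT
    simp only at h1
    have hu1 : -1 ≤ (v t1)⁻¹ := by
      have ha := hvle t1 le_rfl
      have hb : (v t1)⁻¹ < 0 := inv_lt_zero.mpr (by linarith)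
      have hc : v t1 * (v t1)⁻¹ = 1 := mul_inv_cancel₀ (hvne t1 le_rfl)
      nlinarith
    have hu2 : (v (t1 + 4))⁻¹ < 0 := inv_lt_zero.mpr (by linarith [hvle (t1+4) hT])
    nlinarith
  -- assemble
  refine ⟨C, hC1, ?_, ?_⟩
  · intro t ht
    have hpt := hp_pos t ht
    have hlam := hpos t ht.le
    have habs : t ^ ((m : ℝ) / 2) ≤ |v t| := by
      have h1 := keyA t ht
      have h2 := hp_sq t ht.le
      calc t ^ ((m : ℝ) / 2) = Real.sqrt ((t ^ ((m : ℝ) / 2)) ^ 2) := (Real.sqrt_sq hpt.le).symm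
        _ ≤ Real.sqrt ((v t) ^ 2) := Real.sqrt_le_sqrt (by rw [h2]; exact h1)
        _ = |v t| := Real.sqrt_sq_eq_abs _
    have hratio : |deriv lam t| / (lam t * t ^ ((m : ℝ) / 2)) = |v t| / t ^ ((m : ℝ) / 2) := by
      rw [hv_def]
      simp only [abs_div, abs_of_pos hlam]
      rw [div_div]
    rw [hratio]
    have h1 : (1:ℝ)/C ≤ 1 := by
      rw [div_le_one hC0]; linarith
    have h2 : (1:ℝ) ≤ |v t| / t ^ ((m : ℝ) / 2) := (one_le_div hpt).mpr habs
    linarith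
  · intro t ht
    have ht0 : (0:ℝ) < t := lt_of_lt_of_le one_pos ht
    have hpt := hp_pos t ht0
    have hlam := hpos t ht0.le
    have hratio : |deriv lam t| / (lam t * t ^ ((m : ℝ) / 2)) = |v t| / t ^ ((m : ℝ) / 2) := by
      rw [hv_def]
      simp only [abs_div, abs_of_pos hlam]
      rw [div_div]
    rw [hratio]
    rw [div_le_iff₀ hpt]
    have h1 := keyB t ht
    have h2 : |v t| = -(v t) := abs_of_neg (hvneg t ht0)
    linarith
end

section
/- Let m ∈ ℕ and let λ : [0,∞) → ℝ be a C² function satisfying λ''(t) = t^m λ(t), λ(0) = 1, λ(+∞) = 0, with λ > 0 and λ' < 0 on (0,∞). Then for every M ∈ ℕ there exists C_M > 0 such that λ(t) + |λ'(t)| ≤ C_M (1+t)^{-M} for all t ≥ 0. -/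
open Filter Set Real

theorem stmt5 (m : ℕ) (lam : ℝ → ℝ)
    (hC2 : ContDiff ℝ 2 lam)
    (hode : ∀ t : ℝ, 0 ≤ t → deriv (deriv lam) t = t ^ m * lam t)
    (h0 : lam 0 = 1)
    (hlim : Filter.Tendsto lam Filter.atTop (nhds 0))
    (hpos : ∀ t : ℝ, 0 ≤ t → 0 < lam t)
    (hneg : ∀ t : ℝ, 0 < t → deriv lam t < 0) :
    ∀ M : ℕ, ∃ C : ℝ, 0 < C ∧
      ∀ t : ℝ, 0 ≤ t → lam t + |deriv lam t| ≤ C / (1 + t) ^ M := by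
  -- basic regularity
  have hreg : Differentiable ℝ lam ∧ Differentiable ℝ (deriv lam)
      ∧ Continuous (deriv (deriv lam)) := by
    have h2 : ContDiff ℝ (1+1 : ℕ) lam := by norm_num; exact hC2
    rw [show ((1+1 : ℕ) : WithTop ℕ∞) = (1:WithTop ℕ∞) + 1 by norm_cast] at h2
    have := contDiff_succ_iff_deriv.mp h2
    exact ⟨this.1, (contDiff_one_iff_deriv.mp this.2.2).1,
      (contDiff_one_iff_deriv.mp this.2.2).2⟩
  obtain ⟨hd, hd', hc''⟩ := hreg
  have hc : Continuous lam := hd.continuous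
  have hc' : Continuous (deriv lam) := hd'.continuous
  -- lam is antitone on [0,∞)
  have hanti : AntitoneOn lam (Ici 0) := by
    apply antitoneOn_of_deriv_nonpos (convex_Ici 0) hc.continuousOn hd.differentiableOn
    intro x hx
    rw [interior_Ici] at hx
    exact (hneg x hx).le
  have lam_le_one : ∀ t : ℝ, 0 ≤ t → lam t ≤ 1 := fun t ht => h0 ▸ hanti self_mem_Ici ht ht
  -- deriv lam is strictly monotone on [0,∞)
  have hmono : StrictMonoOn (deriv lam) (Ici 0) := by
    apply strictMonoOn_of_deriv_pos (convex_Ici 0) hc'.continuousOn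
    intro x hx
    rw [interior_Ici] at hx
    rw [hode x hx.le]
    exact mul_pos (pow_pos hx m) (hpos x hx.le)
  -- MVT facts
  have mvt : ∀ a b : ℝ, a < b → ∃ c ∈ Ioo a b, deriv lam c = (lam b - lam a) / (b - a) := by
    intro a b hab
    exact exists_hasDerivAt_eq_slope lam (deriv lam) hab hc.continuousOn
      (fun x _ => hd.differentiableAt.hasDerivAt)
  -- deriv lam tends to 0 at top
  have hlim' : Tendsto (deriv lam) atTop (nhds 0) := by
    have hlow : Tendsto (fun t => lam t - lam (t - 1)) atTop (nhds 0) := by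
      have : Tendsto (fun t : ℝ => t - 1) atTop atTop := tendsto_atTop_add_const_right _ _ tendsto_id
      simpa using (hlim.sub (hlim.comp this))
    apply tendsto_of_tendsto_of_tendsto_of_le_of_le' hlow tendsto_const_nhds
    · filter_upwards [eventually_ge_atTop (1:ℝ)] with t ht
      obtain ⟨c, hc1, hc2⟩ := mvt (t-1) t (by linarith)
      have hcle : deriv lam c ≤ deriv lam t :=
        hmono.monotoneOn (show c ∈ Ici 0 by simp only [mem_Ici]; linarith [hc1.1])
          (show t ∈ Ici 0 by simp only [mem_Ici]; linarith) hc1.2.le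
      have : deriv lam c = lam t - lam (t-1) := by rw [hc2]; ring_nf
      linarith
    · filter_upwards [eventually_gt_atTop (0:ℝ)] with t ht
      exact (hneg t ht).le
  -- h = (λ')² - λ² is antitone on [1,∞) and tends to 0, hence nonneg
  set h : ℝ → ℝ := fun t => (deriv lam t)^2 - (lam t)^2 with hh
  have hderiv : ∀ t : ℝ, HasDerivAt h
      (2 * deriv lam t * deriv (deriv lam) t - 2 * lam t * deriv lam t) t := by
    intro t
    have h1 : HasDerivAt (fun t => (deriv lam t)^2)
        (2 * deriv lam t * deriv (deriv lam) t) t := by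
      have := ((hd'.differentiableAt (x := t)).hasDerivAt).pow 2
      exact this.congr_deriv (by push_cast; ring)
    have h2 : HasDerivAt (fun t => (lam t)^2) (2 * lam t * deriv lam t) t := by
      have := ((hd.differentiableAt (x := t)).hasDerivAt).pow 2
      exact this.congr_deriv (by push_cast; ring)
    exact h1.sub h2
  have hantih : AntitoneOn h (Ici 1) := by
    apply antitoneOn_of_deriv_nonpos (convex_Ici 1)
      (fun t _ => ((hderiv t).continuousAt.continuousWithinAt))
      (fun t _ => ((hderiv t).differentiableAt.differentiableWithinAt))
    intro x hx
    rw [interior_Ici] at hx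
    rw [(hderiv x).deriv, hode x (by linarith [mem_Ioi.mp hx])]
    have hx1 : (1:ℝ) ≤ x := (mem_Ioi.mp hx).le
    have hxm : (1:ℝ) ≤ x ^ m := one_le_pow₀ hx1
    have hp := hpos x (by linarith : (0:ℝ) ≤ x)
    have hn := hneg x (by linarith : (0:ℝ) < x)
    nlinarith [mul_nonneg (sub_nonneg.mpr hxm) (mul_pos hp (neg_pos.mpr hn)).le]
  have hlimh : Tendsto h atTop (nhds 0) := by
    have : Tendsto (fun t => (deriv lam t)^2 - (lam t)^2) atTop (nhds (0^2 - 0^2)) :=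
      ((hlim'.pow 2).sub (hlim.pow 2))
    simpa using this
  have h_nonneg : ∀ t : ℝ, 1 ≤ t → 0 ≤ h t := by
    intro t ht
    refine le_of_tendsto hlimh ?_
    filter_upwards [eventually_ge_atTop t] with s hs
    exact hantih (mem_Ici.mpr ht) (mem_Ici.mpr (le_trans ht hs)) hs
  -- hence λ ≤ -λ' on [1,∞)
  have key : ∀ t : ℝ, 1 ≤ t → lam t ≤ -(deriv lam t) := by
    intro t ht
    have h1 := h_nonneg t ht
    have h2 := hpos t (by linarith)
    have h3 := hneg t (by linarith)
    simp only [hh] at h1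
    nlinarith
  -- exponential decay of lam
  have gderiv : ∀ t : ℝ, HasDerivAt (fun t => Real.exp t * lam t)
      (Real.exp t * (lam t + deriv lam t)) t := by
    intro t
    have := (Real.hasDerivAt_exp t).mul (hd.differentiableAt (x := t)).hasDerivAt
    exact this.congr_deriv (by ring)
  have gantit : AntitoneOn (fun t => Real.exp t * lam t) (Ici 1) := by
    apply antitoneOn_of_deriv_nonpos (convex_Ici 1)
      (fun t _ => ((gderiv t).continuousAt.continuousWithinAt))
      (fun t _ => ((gderiv t).differentiableAt.differentiableWithinAt))
    intro x hx
    rw [interior_Ici] at hx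
    rw [(gderiv x).deriv]
    have hk := key x (mem_Ioi.mp hx).le
    nlinarith [Real.exp_pos x]
  have lam_exp : ∀ t : ℝ, 1 ≤ t → lam t ≤ Real.exp (1 - t) := by
    intro t ht
    have h1 := gantit (self_mem_Ici) (mem_Ici.mpr ht) ht
    have h2 : lam 1 ≤ 1 := lam_le_one 1 (by norm_num)
    have h3 := Real.exp_pos 1
    have h4 := Real.exp_pos t
    rw [Real.exp_sub, le_div_iff₀ h4]
    simp only at h1
    nlinarith
  have deriv_exp : ∀ t : ℝ, 2 ≤ t → -(deriv lam t) ≤ Real.exp (2 - t) := by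
    intro t ht
    obtain ⟨c, hc1, hc2⟩ := mvt (t-1) t (by linarith)
    have hcle : deriv lam c ≤ deriv lam t :=
      hmono.monotoneOn (show c ∈ Ici 0 by simp only [mem_Ici]; linarith [hc1.1])
        (show t ∈ Ici 0 by simp only [mem_Ici]; linarith) hc1.2.le
    have heq : deriv lam c = lam t - lam (t-1) := by rw [hc2]; ring_nf
    have h5 : lam (t-1) ≤ Real.exp (1 - (t-1)) := lam_exp (t-1) (by linarith)
    have h6 : 0 < lam t := hpos t (by linarith)
    have h7 : Real.exp (1 - (t-1)) = Real.exp (2 - t) := by ring_nf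
    linarith [h7 ▸ h5]
  -- final assembly
  intro M
  obtain ⟨K, hK⟩ := (isCompact_Icc (a := (0:ℝ)) (b := 2)).exists_bound_of_continuousOn
    hc'.continuousOn
  have hK0 : 0 ≤ K := le_trans (norm_nonneg _) (hK 0 (by norm_num))
  refine ⟨(1 + K) * 3 ^ M + 2 * (M.factorial) * Real.exp 3, by positivity, ?_⟩
  intro t ht
  have hpow : (0:ℝ) < (1 + t) ^ M := by positivity
  rw [le_div_iff₀ hpow]
  rcases le_or_gt t 2 with h2 | h2
  · have hb1 : lam t + |deriv lam t| ≤ 1 + K := by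
      have := hK t ⟨ht, h2⟩
      rw [Real.norm_eq_abs] at this
      linarith [lam_le_one t ht]
    have hb2 : (1 + t) ^ M ≤ 3 ^ M := pow_le_pow_left₀ (by linarith) (by linarith) M
    have : (lam t + |deriv lam t|) * (1 + t) ^ M ≤ (1 + K) * 3 ^ M :=
      mul_le_mul hb1 hb2 hpow.le (by linarith)
    have hrest : (0:ℝ) ≤ 2 * (M.factorial) * Real.exp 3 := by positivity
    linarith
  · have hdn := hneg t (by linarith)
    have hb1 : lam t + |deriv lam t| ≤ 2 * Real.exp (2 - t) := by
      rw [abs_of_neg hdn]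
      have e1 : lam t ≤ Real.exp (1 - t) := lam_exp t (by linarith)
      have e2 := deriv_exp t h2.le
      have e3 : Real.exp (1 - t) ≤ Real.exp (2 - t) := Real.exp_le_exp.mpr (by linarith)
      linarith
    have hb2 : (1 + t) ^ M ≤ (M.factorial) * Real.exp (1 + t) := by
      have := Real.pow_div_factorial_le_exp (x := 1 + t) (by linarith) M
      have hf : (0:ℝ) < (M.factorial : ℝ) := by positivity
      rw [div_le_iff₀ hf] at this
      linarith
    have hmul : (lam t + |deriv lam t|) * (1 + t) ^ M
        ≤ (2 * Real.exp (2 - t)) * ((M.factorial) * Real.exp (1 + t)) := by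
      apply mul_le_mul hb1 hb2 hpow.le (by positivity)
    have he : Real.exp (2 - t) * Real.exp (1 + t) = Real.exp 3 := by
      rw [← Real.exp_add]; norm_num
    have heq : (2 * Real.exp (2 - t)) * ((M.factorial : ℝ) * Real.exp (1 + t))
        = 2 * (M.factorial) * Real.exp 3 := by rw [← he]; ring
    have hrest : (0:ℝ) ≤ (1 + K) * 3 ^ M := by positivity
    linarith [heq ▸ hmul]
end

section
/- Let m ∈ ℕ and λ be the decaying solution of λ'' = t^m λ with λ(0) = 1, λ(+∞) = 0, λ > 0, λ' < 0 on (0,∞). Define for t, σ, s > 0 the kernel K̂(t,σ) = s^{m+2} σ^m ∫_0^{min(t,σ)} λ(ts) λ(σs) / λ(ys)² dy (here s > 0 is a parameter). Then for every fixed t > 0 and s > 0, ∫_0^∞ K̂(t,σ) dσ = 1 − λ(ts), and in particular ∫_0^∞ K̂(t,σ) dσ ≤ 1. -/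
open MeasureTheory

theorem stmt7 (m : ℕ) (lam : ℝ → ℝ)
    (hC2 : ContDiff ℝ 2 lam)
    (hode : ∀ t : ℝ, 0 ≤ t → deriv (deriv lam) t = t ^ m * lam t)
    (h0 : lam 0 = 1)
    (hlim : Filter.Tendsto lam Filter.atTop (nhds 0))
    (hpos : ∀ t : ℝ, 0 ≤ t → 0 < lam t)
    (hneg : ∀ t : ℝ, 0 < t → deriv lam t < 0)
    (s : ℝ) (hs : 0 < s) :
    let K : ℝ → ℝ → ℝ := fun t σ => s ^ (m + 2) * σ ^ m *
      ∫ y in Set.Ioc (0 : ℝ) (min t σ), lam (t * s) * lam (σ * s) / (lam (y * s)) ^ 2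
    ∀ t : ℝ, 0 < t →
      (∫ σ in Set.Ioi (0 : ℝ), K t σ) = 1 - lam (t * s) ∧
      (∫ σ in Set.Ioi (0 : ℝ), K t σ) ≤ 1 := by
  intro K t ht
  open Set Filter in
  -- basic differentiability facts
  have h2 : ContDiff ℝ ((1:ℕ∞)+1) lam := by norm_num; exact hC2
  rw [contDiff_succ_iff_deriv] at h2
  have hlam1 : ∀ x, HasDerivAt lam (deriv lam x) x :=
    fun x => (h2.1 x).hasDerivAt
  have hlam2 : ∀ x, HasDerivAt (deriv lam) (deriv (deriv lam) x) x :=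
    fun x => (h2.2.2.differentiable (by simp) x).hasDerivAt
  set u : ℝ → ℝ := fun σ => lam (σ * s) with hu_def
  set u1 : ℝ → ℝ := fun σ => deriv lam (σ * s) * s with hu1_def
  set u2 : ℝ → ℝ := fun σ => s ^ (m + 2) * σ ^ m * lam (σ * s) with hu2_def
  have hu : ∀ σ : ℝ, HasDerivAt u (u1 σ) σ :=
    fun σ => (hlam1 (σ * s)).comp σ (hasDerivAt_mul_const s)
  have hu1' : ∀ σ : ℝ, HasDerivAt u1 (deriv (deriv lam) (σ * s) * s * s) σ :=
    fun σ => by have := ((hlam2 (σ * s)).comp σ (hasDerivAt_mul_const s)).mul_const s; exact this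
  have hodeval : ∀ σ : ℝ, 0 ≤ σ → deriv (deriv lam) (σ * s) * s * s = u2 σ := by
    intro σ hσ
    rw [hode (σ * s) (by positivity), hu2_def]
    simp only [mul_pow, pow_add]
    ring
  have hu1 : ∀ σ : ℝ, 0 ≤ σ → HasDerivAt u1 (u2 σ) σ := by
    intro σ hσ
    have := hu1' σ
    rwa [hodeval σ hσ] at this
  have hu_cont : Continuous u := hC2.continuous.comp (continuous_id.mul continuous_const)
  have hu1_cont : Continuous u1 :=
    ((h2.2.2.continuous).comp (continuous_id.mul continuous_const)).mul continuous_const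
  have hu2_cont : Continuous u2 := by
    apply Continuous.mul
    · exact (continuous_const.mul (continuous_pow m))
    · exact hC2.continuous.comp (continuous_id.mul continuous_const)
  have hu0 : u 0 = 1 := by simp [hu_def, h0]
  have huposGe : ∀ σ : ℝ, 0 ≤ σ → 0 < u σ := fun σ hσ => hpos (σ * s) (by positivity)
  -- positivity of u on a neighborhood of [0, ∞)
  have hnbhd : ∀ᶠ σ in nhds (0:ℝ), 0 < u σ :=
    (hu_cont.continuousAt (x := (0:ℝ))).eventually (eventually_gt_nhds (by rw [hu0]; norm_num))
  obtain ⟨δ, hδpos, hδball⟩ := Metric.eventually_nhds_iff.mp hnbhd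
  have hupos : ∀ σ : ℝ, -δ < σ → 0 < u σ := by
    intro σ hσ
    rcases le_or_gt 0 σ with h | h
    · exact huposGe σ h
    · exact hδball (by rw [Real.dist_eq, sub_zero, abs_of_neg h]; linarith)
  -- Φ and its derivative on S = Ioi (-δ)
  set Φ : ℝ → ℝ := fun σ => ∫ y in (0:ℝ)..σ, 1 / (u y) ^ 2 with hΦ_def
  have hf_contOn : ContinuousOn (fun y => 1 / (u y) ^ 2) (Ioi (-δ)) := by
    apply ContinuousOn.div continuousOn_const ((hu_cont.continuousOn).pow 2)
    exact fun y hy => pow_ne_zero 2 (ne_of_gt (hupos y hy))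
  have hΦderiv : ∀ σ : ℝ, -δ < σ → HasDerivAt Φ (1 / (u σ) ^ 2) σ := by
    intro σ hσ
    apply intervalIntegral.integral_hasDerivAt_right
    · apply (hf_contOn.mono _).intervalIntegrable
      intro y hy
      have h1 : min 0 σ ≤ y := hy.1
      have : -δ < min 0 σ := lt_min (by linarith) hσ
      exact lt_of_lt_of_le this h1
    · exact hf_contOn.stronglyMeasurableAtFilter isOpen_Ioi σ hσ
    · exact hf_contOn.continuousAt (isOpen_Ioi.mem_nhds hσ)
  have hΦcont : ContinuousOn Φ (Icc 0 t) := fun σ hσ =>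
    (hΦderiv σ (by linarith [hσ.1])).continuousAt.continuousWithinAt
  -- the antiderivative H on [0, t]
  set H : ℝ → ℝ := fun σ => u1 σ * Φ σ + 1 / u σ with hH_def
  have hHderiv : ∀ σ ∈ Icc (0:ℝ) t, HasDerivAt H (u2 σ * Φ σ) σ := by
    intro σ hσ
    have hne : u σ ≠ 0 := ne_of_gt (huposGe σ hσ.1)
    have d1 : HasDerivAt (fun σ => u1 σ * Φ σ)
        (u2 σ * Φ σ + u1 σ * (1 / (u σ) ^ 2)) σ :=
      (hu1 σ hσ.1).mul (hΦderiv σ (by linarith [hσ.1]))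
    have d2 : HasDerivAt (fun σ => 1 / u σ)
        ((0 * u σ - 1 * u1 σ) / (u σ) ^ 2) σ :=
      (hasDerivAt_const σ (1:ℝ)).div (hu σ) hne
    have := d1.add d2
    rw [show u2 σ * Φ σ = u2 σ * Φ σ + u1 σ * (1 / (u σ) ^ 2) + (0 * u σ - 1 * u1 σ) / (u σ) ^ 2 by ring]
    exact this
  -- FTC on [0, t]
  have hintΦ : IntervalIntegrable (fun σ => u2 σ * Φ σ) volume 0 t := by
    apply ContinuousOn.intervalIntegrable
    rw [uIcc_of_le ht.le]
    exact (hu2_cont.continuousOn).mul hΦcont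
  have key1 : ∫ σ in (0:ℝ)..t, u2 σ * Φ σ = H t - H 0 := by
    apply intervalIntegral.integral_eq_sub_of_hasDerivAt _ hintΦ
    intro σ hσ
    rw [uIcc_of_le ht.le] at hσ
    exact hHderiv σ hσ
  have hH0 : H 0 = 1 := by
    simp [hH_def, hΦ_def, hu0, intervalIntegral.integral_same]
  -- u1 is monotone on [0, ∞), negative, tends to 0
  have hu1neg : ∀ σ : ℝ, 0 < σ → u1 σ < 0 := by
    intro σ hσ
    exact mul_neg_of_neg_of_pos (hneg (σ * s) (by positivity)) hs
  have hmono : MonotoneOn u1 (Ici 0) := by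
    apply monotoneOn_of_deriv_nonneg (convex_Ici 0) hu1_cont.continuousOn
    · intro x hx
      exact (hu1' x).differentiableAt.differentiableWithinAt
    · intro x hx
      rw [interior_Ici] at hx
      rw [(hu1' x).deriv, hodeval x (le_of_lt hx)]
      have := huposGe x (le_of_lt hx)
      rw [hu2_def]
      have h1 : (0:ℝ) ≤ s ^ (m+2) * x ^ m :=
        mul_nonneg (pow_nonneg hs.le _) (pow_nonneg (le_of_lt hx) _)
      exact mul_nonneg h1 this.le
  have hu1le : ∀ x : ℝ, 0 ≤ x → u1 x ≤ 0 := by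
    intro x hx
    rcases eq_or_lt_of_le hx with h | h
    · have h01 : u1 0 ≤ u1 1 := hmono (self_mem_Ici) (by norm_num) (by norm_num)
      have := hu1neg 1 one_pos
      rw [← h]; linarith
    · exact (hu1neg x h).le
  set g : ℝ → ℝ := fun σ => u1 (max σ 0) with hg_def
  have hgmono : Monotone g := by
    intro a b hab
    exact hmono (le_max_right a 0) (le_max_right b 0) (max_le_max hab le_rfl)
  have hgle : ∀ σ, g σ ≤ 0 := fun σ => hu1le _ (le_max_right σ 0)
  have hgbdd : BddAbove (Set.range g) := ⟨0, by rintro x ⟨σ, rfl⟩; exact hgle σ⟩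
  set L : ℝ := ⨆ i, g i with hL_def
  have hgtend : Tendsto g atTop (nhds L) := tendsto_atTop_ciSup hgmono hgbdd
  have hu1tend : Tendsto u1 atTop (nhds L) := by
    apply hgtend.congr'
    filter_upwards [eventually_ge_atTop (0:ℝ)] with σ hσ
    rw [hg_def]; simp [max_eq_left hσ]
  have hLle : L ≤ 0 := ciSup_le hgle
  have hL0 : L = 0 := by
    by_contra hne
    have hL : L < 0 := lt_of_le_of_ne hLle hne
    have hub : ∀ x : ℝ, 0 ≤ x → u1 x ≤ L := by
      intro x hx
      have h1 : g x ≤ ⨆ i, g i := le_ciSup hgbdd x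
      rw [← hL_def] at h1
      have h2 : g x = u1 x := by
        show u1 (max x 0) = u1 x
        rw [max_eq_left hx]
      rwa [h2] at h1
    -- h σ := u σ - σ * L is antitone on [0,∞)
    have hanti : AntitoneOn (fun σ => u σ - σ * L) (Ici 0) := by
      apply antitoneOn_of_deriv_nonpos (convex_Ici 0)
      · exact (hu_cont.sub (continuous_id.mul continuous_const)).continuousOn
      · intro x hx
        exact ((hu x).sub (hasDerivAt_mul_const L)).differentiableAt.differentiableWithinAt
      · intro x hx
        rw [interior_Ici] at hx
        rw [HasDerivAt.deriv (f := fun σ => u σ - σ * L) ((hu x).sub (hasDerivAt_mul_const L))]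
        have := hub x hx.le
        linarith
    set σ₀ : ℝ := 1 / (-L) + 1 with hσ₀_def
    have hσ₀pos : 0 < σ₀ := by
      have h3 : 0 < 1 / (-L) := one_div_pos.mpr (neg_pos.mpr hL)
      rw [hσ₀_def]
      linarith
    have h5 : u σ₀ - σ₀ * L ≤ u 0 - 0 * L :=
      hanti (self_mem_Ici) (mem_Ici.mpr hσ₀pos.le) hσ₀pos.le
    rw [hu0, zero_mul, sub_zero] at h5
    have hLne : L ≠ 0 := hne
    have hval : σ₀ * L = -1 + L := by
      rw [hσ₀_def, add_mul, one_mul, div_mul_eq_mul_div, one_mul, div_neg, div_self hLne]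
    have hupos₀ := huposGe σ₀ hσ₀pos.le
    linarith
  rw [hL0] at hu1tend
  -- improper integral of u2 over (t, ∞)
  have hu2nonneg : ∀ x ∈ Ioi t, 0 ≤ u2 x := by
    intro x hx
    have hxpos : (0:ℝ) < x := lt_trans ht hx
    have := huposGe x hxpos.le
    rw [hu2_def]
    have h1 : (0:ℝ) ≤ s ^ (m+2) * x ^ m :=
      mul_nonneg (pow_nonneg hs.le _) (pow_nonneg hxpos.le _)
    exact mul_nonneg h1 this.le
  have hu1derivIci : ∀ x ∈ Ici t, HasDerivAt u1 (u2 x) x :=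
    fun x hx => hu1 x (le_trans ht.le hx)
  have key2 : ∫ σ in Ioi t, u2 σ = 0 - u1 t :=
    integral_Ioi_of_hasDerivAt_of_nonneg' hu1derivIci hu2nonneg hu1tend
  have hint2 : IntegrableOn u2 (Ioi t) :=
    integrableOn_Ioi_deriv_of_nonneg' hu1derivIci hu2nonneg hu1tend
  -- rewrite K on the two pieces
  have hK1 : ∀ σ ∈ Ioc (0:ℝ) t, K t σ = lam (t * s) * (u2 σ * Φ σ) := by
    intro σ hσ
    show s ^ (m + 2) * σ ^ m *
      ∫ y in Set.Ioc (0 : ℝ) (min t σ), lam (t * s) * lam (σ * s) / (lam (y * s)) ^ 2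
        = lam (t * s) * (u2 σ * Φ σ)
    rw [min_eq_right hσ.2]
    have : ∫ y in Set.Ioc (0 : ℝ) σ, lam (t * s) * lam (σ * s) / (lam (y * s)) ^ 2
        = (lam (t * s) * lam (σ * s)) * ∫ y in Set.Ioc (0 : ℝ) σ, 1 / (lam (y * s)) ^ 2 := by
      rw [← MeasureTheory.integral_const_mul]
      congr 1
      ext y
      ring
    rw [this]
    have hΦeq : Φ σ = ∫ y in Set.Ioc (0 : ℝ) σ, 1 / (lam (y * s)) ^ 2 := by
      rw [hΦ_def]
      exact intervalIntegral.integral_of_le hσ.1.le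
    rw [← hΦeq, hu2_def]
    ring
  have hK2 : ∀ σ ∈ Ioi t, K t σ = (lam (t * s) * Φ t) * u2 σ := by
    intro σ hσ
    show s ^ (m + 2) * σ ^ m *
      ∫ y in Set.Ioc (0 : ℝ) (min t σ), lam (t * s) * lam (σ * s) / (lam (y * s)) ^ 2
        = (lam (t * s) * Φ t) * u2 σ
    rw [min_eq_left (le_of_lt hσ)]
    have : ∫ y in Set.Ioc (0 : ℝ) t, lam (t * s) * lam (σ * s) / (lam (y * s)) ^ 2
        = (lam (t * s) * lam (σ * s)) * ∫ y in Set.Ioc (0 : ℝ) t, 1 / (lam (y * s)) ^ 2 := by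
      rw [← MeasureTheory.integral_const_mul]
      congr 1
      ext y
      ring
    rw [this]
    have hΦeq : Φ t = ∫ y in Set.Ioc (0 : ℝ) t, 1 / (lam (y * s)) ^ 2 := by
      rw [hΦ_def]
      exact intervalIntegral.integral_of_le ht.le
    rw [← hΦeq, hu2_def]
    ring
  -- integrability of the pieces
  have hi1' : IntegrableOn (fun σ => lam (t * s) * (u2 σ * Φ σ)) (Ioc 0 t) := by
    apply IntegrableOn.mono_set _ Ioc_subset_Icc_self
    apply ContinuousOn.integrableOn_Icc
    exact continuousOn_const.mul ((hu2_cont.continuousOn).mul hΦcont)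
  have hi1 : IntegrableOn (K t) (Ioc 0 t) := by
    apply hi1'.congr_fun _ measurableSet_Ioc
    intro σ hσ
    exact (hK1 σ hσ).symm
  have hi2' : IntegrableOn (fun σ => (lam (t * s) * Φ t) * u2 σ) (Ioi t) :=
    hint2.const_mul _
  have hi2 : IntegrableOn (K t) (Ioi t) := by
    apply hi2'.congr_fun _ measurableSet_Ioi
    intro σ hσ
    exact (hK2 σ hσ).symm
  -- assemble
  have hsplit : (∫ σ in Set.Ioi (0:ℝ), K t σ)
      = (∫ σ in Ioc (0:ℝ) t, K t σ) + ∫ σ in Ioi t, K t σ := by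
    rw [← Ioc_union_Ioi_eq_Ioi ht.le]
    exact setIntegral_union (Ioc_disjoint_Ioi le_rfl) measurableSet_Ioi hi1 hi2
  have hval1 : (∫ σ in Ioc (0:ℝ) t, K t σ) = lam (t * s) * (H t - H 0) := by
    rw [setIntegral_congr_fun measurableSet_Ioc hK1, MeasureTheory.integral_const_mul,
      ← intervalIntegral.integral_of_le ht.le, key1]
  have hval2 : (∫ σ in Ioi t, K t σ) = (lam (t * s) * Φ t) * (0 - u1 t) := by
    rw [setIntegral_congr_fun measurableSet_Ioi hK2, MeasureTheory.integral_const_mul, key2]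
  have hlamne : lam (t * s) ≠ 0 := ne_of_gt (hpos (t * s) (by positivity))
  have hmain : (∫ σ in Set.Ioi (0:ℝ), K t σ) = 1 - lam (t * s) := by
    rw [hsplit, hval1, hval2, hH0, hH_def]
    show lam (t * s) * (u1 t * Φ t + 1 / u t - 1) + lam (t * s) * Φ t * (0 - u1 t)
      = 1 - lam (t * s)
    have hut : u t = lam (t * s) := rfl
    rw [hut]
    field_simp
    ring
  refine ⟨hmain, ?_⟩
  rw [hmain]
  have := hpos (t * s) (by positivity)
  linarith
end

section
/- Let l ∈ ℕ, γ ∈ ℝ, and ψ ∈ H^γ(ℝⁿ). Let λ be the decaying solution of λ'' = t^{2l−1} λ with λ(0)=1, λ(+∞)=0, satisfying λ(t) + |λ'(t)| ≤ C_M (1+t)^{-M} for all M. Define w by its Fourier transform ŵ(t,ξ) = λ(−t |ξ|^{2/(2l+1)}) ψ̂(ξ) for t ≤ 0. Then for every t ≤ 0, ‖w(t,·)‖_{H^γ(ℝⁿ)} ≤ C ‖ψ‖_{H^γ(ℝⁿ)} and ‖∂_t w(t,·)‖_{H^{γ − 2/(2l+1)}(ℝⁿ)} ≤ C ‖ψ‖_{H^γ(ℝⁿ)},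 with C independent of t and ψ. -/
open MeasureTheory Real FourierTransform
open scoped ENNReal

lemma stmt16_aux {α : Type*} [MeasurableSpace α] (μ : Measure α) (f g : α → ℂ) (C : ℝ)
    (hC : 0 ≤ C) (h : ∀ x, ‖g x‖ ≤ C * ‖f x‖) :
    eLpNorm g 2 μ ≤ ENNReal.ofReal C * eLpNorm f 2 μ := by
  calc eLpNorm g 2 μ ≤ eLpNorm ((C : ℂ) • f) 2 μ := by
        apply eLpNorm_mono
        intro x
        simpa [Pi.smul_apply, norm_smul, abs_of_nonneg hC] using h x
    _ = (‖(C : ℂ)‖₊ : ℝ≥0∞) * eLpNorm f 2 μ := eLpNorm_const_smul (C : ℂ) f 2 μ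
    _ = ENNReal.ofReal C * eLpNorm f 2 μ := by
        congr 1
        rw [← enorm_eq_nnnorm, ← ofReal_norm]
        simp [abs_of_nonneg hC]

theorem stmt16 (n l : ℕ) (hn : 1 ≤ n) (hl : 1 ≤ l) (γ : ℝ)
    (lam : ℝ → ℝ)
    (hC2 : ContDiff ℝ 2 lam)
    (hode : ∀ t : ℝ, 0 ≤ t → deriv (deriv lam) t = t ^ (2 * l - 1) * lam t)
    (h0 : lam 0 = 1)
    (hlim : Filter.Tendsto lam Filter.atTop (nhds 0))
    (hdecay : ∀ M : ℕ, ∃ CM : ℝ, 0 < CM ∧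
      ∀ t : ℝ, 0 ≤ t → lam t + |deriv lam t| ≤ CM / (1 + t) ^ M) :
    ∃ C : ℝ, 0 < C ∧
      ∀ ψ : EuclideanSpace ℝ (Fin n) → ℂ,
        eLpNorm (fun ξ : EuclideanSpace ℝ (Fin n) =>
          (((1 + ‖ξ‖ ^ 2) ^ (γ / 2) : ℝ) : ℂ) * 𝓕 ψ ξ) 2 volume < ⊤ →
        ∀ t : ℝ, t ≤ 0 →
          eLpNorm (fun ξ : EuclideanSpace ℝ (Fin n) =>
              (((1 + ‖ξ‖ ^ 2) ^ (γ / 2) : ℝ) : ℂ) *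
                ((lam (-t * ‖ξ‖ ^ ((2 : ℝ) / (2 * (l : ℝ) + 1))) : ℝ) : ℂ) * 𝓕 ψ ξ)
            2 volume ≤
          ENNReal.ofReal C *
            eLpNorm (fun ξ : EuclideanSpace ℝ (Fin n) =>
              (((1 + ‖ξ‖ ^ 2) ^ (γ / 2) : ℝ) : ℂ) * 𝓕 ψ ξ) 2 volume ∧
          eLpNorm (fun ξ : EuclideanSpace ℝ (Fin n) =>
              (((1 + ‖ξ‖ ^ 2) ^ ((γ - 2 / (2 * (l : ℝ) + 1)) / 2) : ℝ) : ℂ) *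
                ((-(‖ξ‖ ^ ((2 : ℝ) / (2 * (l : ℝ) + 1))) *
                    deriv lam (-t * ‖ξ‖ ^ ((2 : ℝ) / (2 * (l : ℝ) + 1))) : ℝ) : ℂ) *
                  𝓕 ψ ξ)
            2 volume ≤
          ENNReal.ofReal C *
            eLpNorm (fun ξ : EuclideanSpace ℝ (Fin n) =>
              (((1 + ‖ξ‖ ^ 2) ^ (γ / 2) : ℝ) : ℂ) * 𝓕 ψ ξ) 2 volume := by
  -- boundedness of lam on [0, ∞)
  obtain ⟨T, hT⟩ : ∃ T : ℝ, ∀ t ≥ T, |lam t| ≤ 1 := by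
    have h := hlim.eventually (Metric.closedBall_mem_nhds (0 : ℝ) one_pos)
    rw [Filter.eventually_atTop] at h
    obtain ⟨T, hT⟩ := h
    refine ⟨T, fun t ht => ?_⟩
    have := hT t ht
    simpa [Metric.mem_closedBall, Real.dist_eq] using this
  obtain ⟨B0, hB0⟩ : ∃ B0 : ℝ, ∀ t ∈ Set.Icc (0 : ℝ) T, |lam t| ≤ B0 := by
    obtain ⟨B0, hB0⟩ := (isCompact_Icc (a := (0 : ℝ)) (b := T)).exists_bound_of_continuousOn
      hC2.continuous.continuousOn
    exact ⟨B0, fun t ht => by simpa using hB0 t ht⟩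
  set B : ℝ := max B0 1 with hBdef
  have hB : ∀ t : ℝ, 0 ≤ t → |lam t| ≤ B := by
    intro t ht
    rcases le_total t T with h | h
    · exact (hB0 t ⟨ht, h⟩).trans (le_max_left _ _)
    · exact (hT t h).trans (le_max_right _ _)
  have hB1 : (1 : ℝ) ≤ B := le_max_right _ _
  obtain ⟨C0, hC0pos, hC0⟩ := hdecay 0
  have hD : ∀ t : ℝ, 0 ≤ t → |deriv lam t| ≤ C0 + B := by
    intro t ht
    have h1 := hC0 t ht
    simp only [pow_zero, div_one] at h1
    have h2 := hB t ht
    have := abs_le.1 h2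
    linarith
  set C : ℝ := C0 + B + 1 with hCdef
  have hCpos : 0 < C := by positivity
  have hBC : B ≤ C := by linarith
  have hDC : C0 + B ≤ C := by linarith
  refine ⟨C, hCpos, fun ψ _ t ht => ?_⟩
  set σ : ℝ := (2 : ℝ) / (2 * (l : ℝ) + 1) with hσdef
  have hσpos : 0 < σ := by
    apply div_pos two_pos
    positivity
  -- key weight facts
  have key : ∀ ξ : EuclideanSpace ℝ (Fin n),
      ‖ξ‖ ^ σ ≤ (1 + ‖ξ‖ ^ 2) ^ (σ / 2) := by
    intro ξ
    have h1 : ‖ξ‖ ^ σ = (‖ξ‖ ^ 2) ^ (σ / 2) := by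
      rw [← Real.rpow_natCast ‖ξ‖ 2, ← Real.rpow_mul (norm_nonneg ξ)]
      · congr 1
        push_cast
        ring
    rw [h1]
    apply Real.rpow_le_rpow (by positivity) (by linarith [sq_nonneg ‖ξ‖]) (by positivity)
  have hwadd : ∀ ξ : EuclideanSpace ℝ (Fin n),
      (1 + ‖ξ‖ ^ 2) ^ ((γ - σ) / 2) * (1 + ‖ξ‖ ^ 2) ^ (σ / 2) = (1 + ‖ξ‖ ^ 2) ^ (γ / 2) := by
    intro ξ
    rw [← Real.rpow_add (by positivity)]
    ring_nf
  constructor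
  · -- first bound
    apply stmt16_aux _ _ _ C hCpos.le
    intro ξ
    have harg : 0 ≤ -t * ‖ξ‖ ^ σ := mul_nonneg (by linarith) (Real.rpow_nonneg (norm_nonneg ξ) σ)
    have hlb := hB _ harg
    have hw : (0 : ℝ) < (1 + ‖ξ‖ ^ 2) ^ (γ / 2) := by positivity
    calc ‖(((1 + ‖ξ‖ ^ 2) ^ (γ / 2) : ℝ) : ℂ) * ((lam (-t * ‖ξ‖ ^ σ) : ℝ) : ℂ) * 𝓕 ψ ξ‖
        = (1 + ‖ξ‖ ^ 2) ^ (γ / 2) * |lam (-t * ‖ξ‖ ^ σ)| * ‖𝓕 ψ ξ‖ := by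
          simp [norm_mul, Complex.norm_real, abs_of_pos hw]
      _ ≤ (1 + ‖ξ‖ ^ 2) ^ (γ / 2) * C * ‖𝓕 ψ ξ‖ := by
          have hlc : |lam (-t * ‖ξ‖ ^ σ)| ≤ C := hlb.trans hBC
          exact mul_le_mul_of_nonneg_right
            (mul_le_mul_of_nonneg_left hlc hw.le) (norm_nonneg _)
      _ = C * ‖(((1 + ‖ξ‖ ^ 2) ^ (γ / 2) : ℝ) : ℂ) * 𝓕 ψ ξ‖ := by
          simp [norm_mul, Complex.norm_real, abs_of_pos hw]
          ring
  · -- second bound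
    apply stmt16_aux _ _ _ C hCpos.le
    intro ξ
    have harg : 0 ≤ -t * ‖ξ‖ ^ σ := mul_nonneg (by linarith) (Real.rpow_nonneg (norm_nonneg ξ) σ)
    have hdb := (hD _ harg).trans hDC
    have hw : (0 : ℝ) < (1 + ‖ξ‖ ^ 2) ^ (γ / 2) := by positivity
    have hw' : (0 : ℝ) < (1 + ‖ξ‖ ^ 2) ^ ((γ - σ) / 2) := by positivity
    have hr : (0 : ℝ) ≤ ‖ξ‖ ^ σ := Real.rpow_nonneg (norm_nonneg ξ) σ
    have hwr : (1 + ‖ξ‖ ^ 2) ^ ((γ - σ) / 2) * ‖ξ‖ ^ σ ≤ (1 + ‖ξ‖ ^ 2) ^ (γ / 2) := by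
      calc (1 + ‖ξ‖ ^ 2) ^ ((γ - σ) / 2) * ‖ξ‖ ^ σ
          ≤ (1 + ‖ξ‖ ^ 2) ^ ((γ - σ) / 2) * (1 + ‖ξ‖ ^ 2) ^ (σ / 2) :=
            mul_le_mul_of_nonneg_left (key ξ) hw'.le
        _ = (1 + ‖ξ‖ ^ 2) ^ (γ / 2) := hwadd ξ
    calc ‖(((1 + ‖ξ‖ ^ 2) ^ ((γ - σ) / 2) : ℝ) : ℂ) *
            ((-(‖ξ‖ ^ σ) * deriv lam (-t * ‖ξ‖ ^ σ) : ℝ) : ℂ) * 𝓕 ψ ξ‖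
        = (1 + ‖ξ‖ ^ 2) ^ ((γ - σ) / 2) * (‖ξ‖ ^ σ * |deriv lam (-t * ‖ξ‖ ^ σ)|) * ‖𝓕 ψ ξ‖ := by
          simp [norm_mul, Complex.norm_real, abs_of_pos hw', abs_mul, abs_of_nonneg hr]
      _ ≤ (1 + ‖ξ‖ ^ 2) ^ (γ / 2) * C * ‖𝓕 ψ ξ‖ := by
          have hn := norm_nonneg (𝓕 ψ ξ)
          have h1 : (1 + ‖ξ‖ ^ 2) ^ ((γ - σ) / 2) * (‖ξ‖ ^ σ * |deriv lam (-t * ‖ξ‖ ^ σ)|)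
              ≤ (1 + ‖ξ‖ ^ 2) ^ (γ / 2) * C := by
            calc (1 + ‖ξ‖ ^ 2) ^ ((γ - σ) / 2) * (‖ξ‖ ^ σ * |deriv lam (-t * ‖ξ‖ ^ σ)|)
                = ((1 + ‖ξ‖ ^ 2) ^ ((γ - σ) / 2) * ‖ξ‖ ^ σ) * |deriv lam (-t * ‖ξ‖ ^ σ)| := by
                  ring
              _ ≤ (1 + ‖ξ‖ ^ 2) ^ (γ / 2) * C := by
                  apply mul_le_mul hwr hdb (abs_nonneg _) hw.le
          exact mul_le_mul_of_nonneg_right h1 hn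
      _ = C * ‖(((1 + ‖ξ‖ ^ 2) ^ (γ / 2) : ℝ) : ℂ) * 𝓕 ψ ξ‖ := by
          simp [norm_mul, Complex.norm_real, abs_of_pos hw]
          ring
end

section
/- Let l ∈ ℕ, and for z ∈ ℂ let Φ(α, γ; z) denote the confluent hypergeometric function. Then there exists C > 0 such that for all t ≥ 0 and ξ ∈ ℝⁿ \ {0}, the symbol V₂(t,|ξ|) = t e^{−z/2} Φ((2l+3)/(2(2l+1)), (2l+3)/(2l+1); z) with z = (4i/(2l+1)) t^{(2l+1)/2} |ξ| satisfies |V₂(t,|ξ|)| ≤ C |ξ|^{−2/(2l+1)}. -/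
open Real

/-- The confluent hypergeometric function `Φ(α, γ; z) = ∑_k (α)_k / (γ)_k · z^k / k!`. -/
noncomputable def confluentHypergeom (α γ z : ℂ) : ℂ :=
  ∑' k : ℕ, ((ascPochhammer ℂ k).eval α / (ascPochhammer ℂ k).eval γ) * z ^ k /
    (k.factorial : ℂ)


noncomputable section
namespace S18

def coef (a : ℝ) (k : ℕ) : ℂ :=
  ((ascPochhammer ℂ k).eval (a : ℂ) / (ascPochhammer ℂ k).eval ((2*a : ℝ) : ℂ)) /
    (k.factorial : ℂ)
lemma poch_cast (x : ℝ) (k : ℕ) :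
    (ascPochhammer ℂ k).eval ((x : ℂ)) = (((ascPochhammer ℝ k).eval x : ℝ) : ℂ) := by
  rw [← ascPochhammer_map (algebraMap ℝ ℂ) k, Polynomial.eval_map]
  exact (Polynomial.eval₂_at_apply (algebraMap ℝ ℂ) x).trans (by simp)

lemma poch_mono {x y : ℝ} (k : ℕ) (hx : 0 < x) (hxy : x ≤ y) :
    (ascPochhammer ℝ k).eval x ≤ (ascPochhammer ℝ k).eval y := by
  induction k with
  | zero => simp
  | succ k ih =>
      rw [ascPochhammer_succ_eval, ascPochhammer_succ_eval]
      have h1 : 0 < (ascPochhammer ℝ k).eval x := ascPochhammer_pos k x hx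
      have h2 : (0:ℝ) ≤ x + k := by positivity
      nlinarith [ascPochhammer_pos k y (lt_of_lt_of_le hx hxy)]

lemma coef_norm_le {a : ℝ} (ha : 0 < a) (k : ℕ) : ‖coef a k‖ ≤ 1 / k.factorial := by
  have h1 : (ascPochhammer ℝ k).eval a ≤ (ascPochhammer ℝ k).eval (2*a) :=
    poch_mono k ha (by linarith)
  have h2 : 0 < (ascPochhammer ℝ k).eval a := ascPochhammer_pos k a ha
  have h3 : 0 < (ascPochhammer ℝ k).eval (2*a) := ascPochhammer_pos k _ (by linarith)
  have heq : ‖coef a k‖ = ((ascPochhammer ℝ k).eval a / (ascPochhammer ℝ k).eval (2*a)) /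
      (k.factorial : ℝ) := by
    rw [coef, poch_cast, poch_cast, norm_div, norm_div]
    simp [Complex.norm_real, Real.norm_eq_abs, abs_of_pos h2, abs_of_pos h3]
  rw [heq]
  have hfac : (0:ℝ) < k.factorial := by positivity
  gcongr
  · exact div_le_one_of_le₀ h1 h3.le

private lemma alg (p q f x κ : ℂ) (hq : q ≠ 0) (hf : f ≠ 0) (hk : κ+1 ≠ 0) (h2 : 2*x+κ ≠ 0) :
    (κ+1)*(κ+2*x)*(p*(x+κ)/(q*(2*x+κ))/((κ+1)*f)) = (κ+x)*(p/q/f) := by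
  field_simp
  ring

lemma coef_rec {a : ℝ} (ha : 0 < a) (k : ℕ) :
    ((k : ℂ) + 1) * ((k : ℂ) + 2*(a:ℂ)) * coef a (k+1) = ((k : ℂ) + (a:ℂ)) * coef a k := by
  have hQ : (ascPochhammer ℂ k).eval ((2*a : ℝ) : ℂ) ≠ 0 := by
    rw [poch_cast]
    exact_mod_cast (ascPochhammer_pos k (2*a) (by linarith)).ne'
  have hfac : ((k.factorial : ℂ)) ≠ 0 := by exact_mod_cast k.factorial_ne_zero
  have hk1 : ((k : ℂ) + 1) ≠ 0 := by
    have h : ((k+1 : ℕ) : ℂ) ≠ 0 := Nat.cast_ne_zero.mpr (Nat.succ_ne_zero k)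
    push_cast at h; exact h
  have h2a : 2*(a:ℂ) + (k:ℂ) ≠ 0 := by
    have h : ((2*a + k : ℝ) : ℂ) = 2*(a:ℂ) + (k:ℂ) := by push_cast; ring
    rw [← h]
    exact_mod_cast (by positivity : (0:ℝ) < 2*a + k).ne'
  have hx : ((2*a:ℝ):ℂ) = 2*(a:ℂ) := by push_cast; ring
  rw [coef, coef, ascPochhammer_succ_eval, ascPochhammer_succ_eval, Nat.factorial_succ,
    Nat.cast_mul, Nat.cast_add, Nat.cast_one, hx]
  rw [hx] at hQ
  exact alg _ _ _ _ _ hQ hfac hk1 h2a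

def S (d : ℕ → ℂ) (z : ℂ) : ℂ := ∑' k, d k * z ^ k

lemma summable_aux {d : ℕ → ℂ} {A : ℝ} (hd : ∀ k, ‖d k‖ ≤ A / k.factorial) (z : ℂ) :
    Summable (fun k => d k * z ^ k) := by
  apply Summable.of_norm_bounded (g := fun k => A * ‖z‖^k / k.factorial)
  · have := (Real.summable_pow_div_factorial ‖z‖).mul_left A
    simpa [mul_div_assoc] using this
  · intro k
    rw [norm_mul, norm_pow]
    calc ‖d k‖ * ‖z‖^k ≤ (A / k.factorial) * ‖z‖^k :=
          mul_le_mul_of_nonneg_right (hd k) (by positivity)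
      _ = A * ‖z‖^k / k.factorial := by ring

lemma hasDerivAt_S {d : ℕ → ℂ} {A : ℝ} (hd : ∀ k, ‖d k‖ ≤ A / k.factorial) (z : ℂ) :
    HasDerivAt (S d) (S (fun k => ((k:ℂ)+1) * d (k+1)) z) z := by
  have hA : 0 ≤ A := le_trans (norm_nonneg (d 0)) (by simpa using hd 0)
  have hz0 : (0:ℝ) ≤ ‖z‖ := norm_nonneg z
  set R : ℝ := ‖z‖ + 1 with hR
  have hR1 : (1:ℝ) ≤ R := by rw [hR]; linarith
  set q : ℝ := 2 * (R + 1) with hq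
  set u : ℕ → ℝ := fun k => A * q^k / k.factorial with hu
  have hu_sum : Summable u := by
    have := (Real.summable_pow_div_factorial q).mul_left A
    simpa [hu, mul_div_assoc] using this
  have key : ∀ k : ℕ, ∀ y : ℂ, y ∈ Metric.ball (0:ℂ) R →
      ‖d k * ((k:ℂ) * y^(k-1))‖ ≤ u k := by
    intro k y hy
    have hyR : ‖y‖ ≤ R := by
      rw [Metric.mem_ball, dist_zero_right] at hy; exact hy.le
    rw [norm_mul, norm_mul, norm_pow, Complex.norm_natCast]
    have h1 : ‖y‖^(k-1) ≤ R^(k-1) := pow_le_pow_left₀ (norm_nonneg _) hyR _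
    have h2 : (k:ℝ) * R^(k-1) ≤ q^k := by
      have hk2 : (k:ℝ) ≤ 2^k := by exact_mod_cast (Nat.lt_two_pow_self (n := k)).le
      have h3 : R^(k-1) ≤ (R+1)^k := by
        calc R^(k-1) ≤ (R+1)^(k-1) := pow_le_pow_left₀ (by linarith) (by linarith) _
          _ ≤ (R+1)^k := pow_le_pow_right₀ (by linarith) (Nat.sub_le k 1)
      calc (k:ℝ) * R^(k-1) ≤ 2^k * (R+1)^k :=
            mul_le_mul hk2 h3 (by positivity) (by positivity)
        _ = q^k := by rw [hq, mul_pow]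
    calc ‖d k‖ * ((k:ℝ) * ‖y‖^(k-1)) ≤ (A / k.factorial) * ((k:ℝ) * R^(k-1)) :=
          mul_le_mul (hd k) (mul_le_mul_of_nonneg_left h1 (Nat.cast_nonneg k))
            (by positivity) (by positivity)
      _ ≤ (A / k.factorial) * q^k := mul_le_mul_of_nonneg_left h2 (by positivity)
      _ = u k := by rw [hu]; ring
  have hzball : z ∈ Metric.ball (0:ℂ) R := by
    rw [Metric.mem_ball, dist_zero_right, hR]; linarith
  have h0ball : (0:ℂ) ∈ Metric.ball (0:ℂ) R := by
    rw [Metric.mem_ball, dist_self]; linarith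
  have hder : HasDerivAt (S d) (∑' k, d k * ((k:ℂ) * z^(k-1))) z :=
    hasDerivAt_tsum_of_isPreconnected hu_sum Metric.isOpen_ball
      (convex_ball (0:ℂ) R).isPreconnected
      (fun k w _ => (hasDerivAt_pow k w).const_mul (d k))
      key h0ball (summable_aux hd 0) hzball
  have hsum : Summable (fun k => d k * ((k:ℂ) * z^(k-1))) :=
    Summable.of_norm_bounded hu_sum (fun k => key k z hzball)
  have hshift : (∑' k, d k * ((k:ℂ) * z^(k-1))) = S (fun k => ((k:ℂ)+1) * d (k+1)) z := by
    rw [Summable.tsum_eq_zero_add hsum]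
    simp only [Nat.cast_zero, zero_mul, mul_zero, zero_add, S]
    apply tsum_congr
    intro k
    push_cast [Nat.add_sub_cancel]
    ring
  exact hshift ▸ hder


def D1 (a : ℝ) (k : ℕ) : ℂ := ((k:ℂ)+1) * coef a (k+1)
def D2 (a : ℝ) (k : ℕ) : ℂ := ((k:ℂ)+1) * D1 a (k+1)

lemma bound_step {d : ℕ → ℂ} {A : ℝ} (hd : ∀ k, ‖d k‖ ≤ A / k.factorial) (k : ℕ) :
    ‖((k:ℂ)+1) * d (k+1)‖ ≤ A / k.factorial := by
  rw [norm_mul]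
  have h1 : ‖((k:ℂ)+1)‖ = (k+1 : ℝ) := by
    rw [show ((k:ℂ)+1) = ((k+1 : ℕ) : ℂ) by push_cast; ring, Complex.norm_natCast]
    push_cast; ring
  rw [h1]
  calc (k+1 : ℝ) * ‖d (k+1)‖ ≤ (k+1 : ℝ) * (A / (k+1).factorial) :=
        mul_le_mul_of_nonneg_left (hd (k+1)) (by positivity)
    _ = A / k.factorial := by
        rw [Nat.factorial_succ]
        push_cast
        have hk : ((k:ℝ) + 1) ≠ 0 := by positivity
        field_simp

lemma D1_bound {a : ℝ} (ha : 0 < a) (k : ℕ) : ‖D1 a k‖ ≤ 1 / k.factorial :=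
  bound_step (coef_norm_le ha) k

lemma D2_bound {a : ℝ} (ha : 0 < a) (k : ℕ) : ‖D2 a k‖ ≤ 1 / k.factorial :=
  bound_step (D1_bound ha) k

lemma ode {a : ℝ} (ha : 0 < a) (z : ℂ) :
    2*(a:ℂ) * S (D1 a) z - (a:ℂ) * S (coef a) z = z * (S (D1 a) z - S (D2 a) z) := by
  have s0 := summable_aux (fun k => coef_norm_le ha k) z
  have s1 := summable_aux (fun k => D1_bound ha k) z
  have s2 := summable_aux (fun k => D2_bound ha k) z
  have hL : 2*(a:ℂ) * S (D1 a) z - (a:ℂ) * S (coef a) z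
      = ∑' k, (2*(a:ℂ) * D1 a k - (a:ℂ) * coef a k) * z^k := by
    rw [S, S, ← tsum_mul_left, ← tsum_mul_left, ← Summable.tsum_sub (s1.mul_left _) (s0.mul_left _)]
    apply tsum_congr; intro k; ring
  have hR : z * (S (D1 a) z - S (D2 a) z) = ∑' k, (D1 a k - D2 a k) * z^(k+1) := by
    rw [S, S, ← Summable.tsum_sub s1 s2, ← tsum_mul_left]
    apply tsum_congr; intro k; ring
  rw [hL, hR]
  have hsL : Summable (fun k => (2*(a:ℂ) * D1 a k - (a:ℂ) * coef a k) * z^k) := by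
    have : (fun k => (2*(a:ℂ) * D1 a k - (a:ℂ) * coef a k) * z^k)
        = fun k => 2*(a:ℂ) * (D1 a k * z^k) - (a:ℂ) * (coef a k * z^k) := by
      ext k; ring
    rw [this]
    exact ((s1.mul_left _).sub (s0.mul_left _))
  rw [Summable.tsum_eq_zero_add hsL]
  have h00 : (2*(a:ℂ) * D1 a 0 - (a:ℂ) * coef a 0) * z^0 = 0 := by
    have h := coef_rec ha 0
    simp only [Nat.cast_zero, zero_add] at h
    simp only [D1, Nat.cast_zero, zero_add, pow_zero, mul_one]
    linear_combination h
  rw [h00, zero_add]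
  apply tsum_congr
  intro k
  have h := coef_rec ha (k+1)
  push_cast at h
  simp only [D1, D2]
  push_cast
  linear_combination z^(k+1) * h


open Complex in
def G (a : ℝ) (z : ℂ) : ℂ := Complex.exp (-(I*z)/2) * S (coef a) (I*z)
open Complex in
def G1 (a : ℝ) (z : ℂ) : ℂ :=
  Complex.exp (-(I*z)/2) * ((-I/2) * S (coef a) (I*z) + I * S (D1 a) (I*z))
open Complex in
def G2 (a : ℝ) (z : ℂ) : ℂ :=
  Complex.exp (-(I*z)/2) * ((-(1:ℂ)/4) * S (coef a) (I*z) + S (D1 a) (I*z) - S (D2 a) (I*z))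

open Complex in
lemma hasDerivAt_lin (z : ℂ) : HasDerivAt (fun w => I*w) I z := by
  simpa using (hasDerivAt_id z).const_mul I

open Complex in
lemma hasDerivAt_expfac (z : ℂ) :
    HasDerivAt (fun w => Complex.exp (-(I*w)/2)) (Complex.exp (-(I*z)/2) * (-I/2)) z := by
  have h : HasDerivAt (fun w => -(I*w)/2) (-I/2) z := ((hasDerivAt_lin z).neg).div_const 2
  exact h.cexp

open Complex in
lemma hasDerivAt_G {a : ℝ} (ha : 0 < a) (z : ℂ) : HasDerivAt (G a) (G1 a z) z := by
  have h1 : HasDerivAt (fun w => S (coef a) (I*w)) (S (D1 a) (I*z) * I) z :=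
    (hasDerivAt_S (fun k => coef_norm_le ha k) (I*z)).comp z (hasDerivAt_lin z)
  have := (hasDerivAt_expfac z).mul h1
  refine this.congr_deriv ?_
  simp only [G1]
  ring

open Complex in
lemma hasDerivAt_G1 {a : ℝ} (ha : 0 < a) (z : ℂ) : HasDerivAt (G1 a) (G2 a z) z := by
  have h1 : HasDerivAt (fun w => S (coef a) (I*w)) (S (D1 a) (I*z) * I) z :=
    (hasDerivAt_S (fun k => coef_norm_le ha k) (I*z)).comp z (hasDerivAt_lin z)
  have h2 : HasDerivAt (fun w => S (D1 a) (I*w)) (S (D2 a) (I*z) * I) z :=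
    (hasDerivAt_S (fun k => D1_bound ha k) (I*z)).comp z (hasDerivAt_lin z)
  have hin : HasDerivAt (fun w => (-I/2) * S (coef a) (I*w) + I * S (D1 a) (I*w))
      ((-I/2) * (S (D1 a) (I*z) * I) + I * (S (D2 a) (I*z) * I)) z :=
    (h1.const_mul _).add (h2.const_mul _)
  have := (hasDerivAt_expfac z).mul hin
  refine this.congr_deriv ?_
  simp only [G2, G1]
  have hI : I * I = -1 := Complex.I_mul_I
  ring_nf
  rw [Complex.I_sq]
  ring

open Complex in
lemma G_ode {a : ℝ} (ha : 0 < a) (z : ℂ) :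
    z * G2 a z + 2*(a:ℂ) * G1 a z + (z/4) * G a z = 0 := by
  have h := ode ha (I*z)
  simp only [G, G1, G2]
  linear_combination Complex.exp (-(I*z)/2) * I * h +
    z * Complex.exp (-(I*z)/2) * (S (D1 a) (I*z) - S (D2 a) (I*z)) * Complex.I_sq


def uu (a : ℝ) (y : ℝ) : ℂ := ((y ^ a : ℝ) : ℂ) * G a y
def uu1 (a : ℝ) (y : ℝ) : ℂ := ((a * y ^ (a-1) : ℝ) : ℂ) * G a y + ((y ^ a : ℝ) : ℂ) * G1 a y
def qq (a : ℝ) (y : ℝ) : ℝ := 1/4 + (a - a^2)/y^2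
def En (a : ℝ) (y : ℝ) : ℝ := Complex.normSq (uu1 a y) + qq a y * Complex.normSq (uu a y)

lemma hasDerivAt_uu {a : ℝ} (ha : 0 < a) {y : ℝ} (hy : 0 < y) :
    HasDerivAt (uu a) (uu1 a y) y := by
  have h1 : HasDerivAt (fun y : ℝ => ((y ^ a : ℝ) : ℂ)) ((a * y ^ (a-1) : ℝ) : ℂ) y :=
    (Real.hasDerivAt_rpow_const (Or.inl hy.ne')).ofReal_comp
  have h2 : HasDerivAt (fun y : ℝ => G a y) (G1 a y) y := (hasDerivAt_G ha _).comp_ofReal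
  exact h1.mul h2

lemma hasDerivAt_uu1 {a : ℝ} (ha : 0 < a) (ha1 : a < 1) {y : ℝ} (hy : 0 < y) :
    HasDerivAt (uu1 a) (((-(qq a y) : ℝ) : ℂ) * uu a y) y := by
  have hroot : HasDerivAt (fun y : ℝ => y ^ (a-1)) ((a-1) * y ^ (a-1-1)) y :=
    Real.hasDerivAt_rpow_const (Or.inl hy.ne')
  have h1 : HasDerivAt (fun y : ℝ => ((a * y ^ (a-1) : ℝ) : ℂ))
      ((a * ((a-1) * y ^ (a-1-1)) : ℝ) : ℂ) y := (hroot.const_mul a).ofReal_comp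
  have h2 : HasDerivAt (fun y : ℝ => ((y ^ a : ℝ) : ℂ)) ((a * y ^ (a-1) : ℝ) : ℂ) y :=
    (Real.hasDerivAt_rpow_const (Or.inl hy.ne')).ofReal_comp
  have hG : HasDerivAt (fun y : ℝ => G a y) (G1 a y) y := (hasDerivAt_G ha _).comp_ofReal
  have hG1 : HasDerivAt (fun y : ℝ => G1 a y) (G2 a y) y := (hasDerivAt_G1 ha _).comp_ofReal
  have hder := (h1.mul hG).add (h2.mul hG1)
  refine hder.congr_deriv ?_
  symm
  -- now the algebraic identity, using the ODE
  have hode := G_ode ha (y : ℂ)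
  have hyC : ((y:ℝ):ℂ) ≠ 0 := Complex.ofReal_ne_zero.mpr hy.ne'
  have e1 : y ^ (a-1) = y ^ a / y := by
    rw [Real.rpow_sub hy, Real.rpow_one]
  have e2 : y ^ (a-1-1) = y ^ a / (y*y) := by
    rw [show a-1-1 = a-2 by ring, Real.rpow_sub hy, show (2:ℝ) = ((2:ℕ):ℝ) by norm_num,
      Real.rpow_natCast]
    norm_num
    ring_nf
  rw [qq, uu]
  rw [e1, e2]
  push_cast
  field_simp
  linear_combination (-(4:ℂ)*((y:ℝ):ℂ) * ((y ^ a : ℝ) : ℂ)) * hode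


lemma hasDerivAt_normSq_comp {v : ℝ → ℂ} {w : ℂ} {y : ℝ} (hv : HasDerivAt v w y) :
    HasDerivAt (fun y => Complex.normSq (v y))
      (2 * ((v y).re * w.re + (v y).im * w.im)) y := by
  have hre : HasDerivAt (fun y => (v y).re) w.re y :=
    (Complex.reCLM.hasFDerivAt (x := v y)).comp_hasDerivAt y hv
  have him : HasDerivAt (fun y => (v y).im) w.im y :=
    (Complex.imCLM.hasFDerivAt (x := v y)).comp_hasDerivAt y hv
  have h := (hre.mul hre).add (him.mul him)
  have heq : (fun y => Complex.normSq (v y)) = fun y => (v y).re * (v y).re + (v y).im * (v y).im := by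
    funext x; rw [Complex.normSq_apply]
  rw [heq]
  refine h.congr_deriv ?_
  ring

lemma hasDerivAt_qq {a : ℝ} {y : ℝ} (hy : 0 < y) :
    HasDerivAt (qq a) ((a - a^2) * (-(2*y) / (y^2)^2)) y := by
  have h1 : HasDerivAt (fun y : ℝ => y^2) (2*y) y := by simpa using hasDerivAt_pow 2 y
  have h2 : HasDerivAt (fun y : ℝ => (y^2)⁻¹) (-(2*y) / (y^2)^2) y :=
    h1.inv (pow_ne_zero 2 hy.ne')
  have h3 := (h2.const_mul (a - a^2)).const_add (1/4 : ℝ)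
  exact h3

lemma hasDerivAt_En {a : ℝ} (ha : 0 < a) (ha1 : a < 1) {y : ℝ} (hy : 0 < y) :
    HasDerivAt (En a) (((a - a^2) * (-(2*y) / (y^2)^2)) * Complex.normSq (uu a y)) y := by
  have hu := hasDerivAt_uu ha hy
  have hu1 := hasDerivAt_uu1 ha ha1 hy
  have h1 := hasDerivAt_normSq_comp hu1
  have h2 := hasDerivAt_normSq_comp hu
  have hq := hasDerivAt_qq (a := a) hy
  have h := h1.add (hq.mul h2)
  have heq : ((fun y => Complex.normSq (uu1 a y)) + qq a * fun y => Complex.normSq (uu a y)) = En a := by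
    funext x; rw [En]; rfl
  rw [heq] at h
  refine h.congr_deriv ?_
  have hre : ((((-(qq a y) : ℝ)) : ℂ) * uu a y).re = -(qq a y) * (uu a y).re := by
    simp [Complex.mul_re]
  have him : ((((-(qq a y) : ℝ)) : ℂ) * uu a y).im = -(qq a y) * (uu a y).im := by
    simp [Complex.mul_im]
  rw [hre, him, Complex.normSq_apply]
  ring

lemma En_antitone {a : ℝ} (ha : 0 < a) (ha1 : a < 1) : AntitoneOn (En a) (Set.Ici 1) := by
  have key : ∀ y ∈ Set.Ici (1:ℝ), 0 < y := fun y hy => lt_of_lt_of_le one_pos hy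
  apply antitoneOn_of_deriv_nonpos (convex_Ici 1)
  · intro y hy
    exact (hasDerivAt_En ha ha1 (key y hy)).continuousAt.continuousWithinAt
  · intro y hy
    rw [interior_Ici] at hy
    exact (hasDerivAt_En ha ha1 (lt_trans one_pos hy)).differentiableAt.differentiableWithinAt
  · intro y hy
    rw [interior_Ici] at hy
    have hy0 : 0 < y := lt_trans one_pos hy
    rw [(hasDerivAt_En ha ha1 hy0).deriv]
    have h1 : 0 ≤ a - a^2 := by nlinarith
    have h2 : -(2*y) / (y^2)^2 ≤ 0 := by
      apply div_nonpos_of_nonpos_of_nonneg <;> [linarith; positivity]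
    have h3 : (0:ℝ) ≤ Complex.normSq (uu a y) := Complex.normSq_nonneg _
    have := mul_nonneg h1 (neg_nonneg.mpr h2)
    nlinarith

lemma qq_ge {a : ℝ} (ha : 0 < a) (ha1 : a < 1) {y : ℝ} (hy : 0 < y) : 1/4 ≤ qq a y := by
  rw [qq]
  have h1 : 0 ≤ a - a^2 := by nlinarith
  have : 0 ≤ (a - a^2)/y^2 := by positivity
  linarith

lemma En_nonneg {a : ℝ} (ha : 0 < a) (ha1 : a < 1) {y : ℝ} (hy : 0 < y) : 0 ≤ En a y := by
  rw [En]
  have := qq_ge ha ha1 hy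
  have h1 := Complex.normSq_nonneg (uu1 a y)
  have h2 := Complex.normSq_nonneg (uu a y)
  nlinarith

/-- decay of `G` for `y ≥ 1`. -/
lemma G_decay {a : ℝ} (ha : 0 < a) (ha1 : a < 1) {y : ℝ} (hy : 1 ≤ y) :
    ‖G a (y:ℂ)‖ ≤ (2 * Real.sqrt (En a 1)) * y ^ (-a) := by
  have hy0 : (0:ℝ) < y := lt_of_lt_of_le one_pos hy
  have hE := En_antitone ha ha1 (Set.mem_Ici.mpr le_rfl) (Set.mem_Ici.mpr hy) hy
  have hq := qq_ge ha ha1 hy0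
  have hns : Complex.normSq (uu a y) ≤ 4 * En a 1 := by
    have h1 := Complex.normSq_nonneg (uu1 a y)
    have h2 := Complex.normSq_nonneg (uu a y)
    rw [En] at hE
    nlinarith
  have hnorm : ‖uu a y‖ ≤ 2 * Real.sqrt (En a 1) := by
    have h1 : ‖uu a y‖ = Real.sqrt (Complex.normSq (uu a y)) := by
      rw [Complex.norm_def]
    rw [h1, show (2:ℝ) * Real.sqrt (En a 1) = Real.sqrt (4 * En a 1) by
      rw [show (4:ℝ) * En a 1 = 2^2 * En a 1 by norm_num, Real.sqrt_mul (by positivity),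
        Real.sqrt_sq (by norm_num)]]
    exact Real.sqrt_le_sqrt hns
  have huG : ‖uu a y‖ = y ^ a * ‖G a (y:ℂ)‖ := by
    rw [uu, norm_mul, Complex.norm_real, Real.norm_eq_abs,
      abs_of_pos (Real.rpow_pos_of_pos hy0 a)]
  have hya : (0:ℝ) < y ^ a := Real.rpow_pos_of_pos hy0 a
  rw [Real.rpow_neg hy0.le]
  rw [huG] at hnorm
  calc ‖G a (y:ℂ)‖ = (y^a * ‖G a (y:ℂ)‖) * (y^a)⁻¹ := by field_simp
    _ ≤ (2 * Real.sqrt (En a 1)) * (y^a)⁻¹ := by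
        apply mul_le_mul_of_nonneg_right hnorm (by positivity)


lemma summable_invfac : Summable (fun k : ℕ => (1:ℝ)/k.factorial) := by
  simpa using Real.summable_pow_div_factorial 1

lemma small_bound {a : ℝ} (ha : 0 < a) {y : ℝ} (hy0 : 0 ≤ y) (hy : y ≤ 1) :
    ‖S (coef a) (Complex.I * y)‖ ≤ ∑' k : ℕ, (1:ℝ)/k.factorial := by
  rw [S]
  have hnorm : ∀ k : ℕ, ‖coef a k * (Complex.I * y)^k‖ ≤ (1:ℝ)/k.factorial := by
    intro k
    rw [norm_mul, norm_pow, norm_mul, Complex.norm_I, one_mul, Complex.norm_real,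
      Real.norm_eq_abs, abs_of_nonneg hy0]
    calc ‖coef a k‖ * y^k ≤ (1/k.factorial) * 1^k := by
          apply mul_le_mul (coef_norm_le ha k) (pow_le_pow_left₀ hy0 hy k) (by positivity)
            (by positivity)
      _ = 1/k.factorial := by norm_num
  have hsum : Summable (fun k => ‖coef a k * (Complex.I * y)^k‖) :=
    Summable.of_nonneg_of_le (fun k => norm_nonneg _) hnorm summable_invfac
  exact le_trans (norm_tsum_le_tsum_norm hsum)
    (Summable.tsum_le_tsum hnorm hsum summable_invfac)

lemma norm_G_eq {a : ℝ} (y : ℝ) : ‖G a (y:ℂ)‖ = ‖S (coef a) (Complex.I * y)‖ := by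
  rw [G, norm_mul, Complex.norm_exp]
  have : (-(Complex.I * (y:ℂ))/2).re = 0 := by simp
  rw [this, Real.exp_zero, one_mul]

lemma main_bound {a : ℝ} (ha : 1/2 < a) (ha1 : a < 1) :
    ∃ C : ℝ, 0 < C ∧ ∀ y : ℝ, 0 ≤ y →
      ‖S (coef a) (Complex.I * y)‖ ≤ C * (1+y) ^ (-a) := by
  have a0 : (0:ℝ) < a := by linarith
  set Se : ℝ := ∑' k : ℕ, (1:ℝ)/k.factorial with hSe
  set K : ℝ := 2 * Real.sqrt (En a 1) with hK
  have hSe0 : 0 ≤ Se := tsum_nonneg (fun k => by positivity)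
  have hK0 : 0 ≤ K := by rw [hK]; positivity
  have h2a : (0:ℝ) < (2:ℝ)^a := Real.rpow_pos_of_pos (by norm_num) a
  refine ⟨(Se + K + 1) * 2^a, by positivity, ?_⟩
  intro y hy
  have h1y : (0:ℝ) < 1 + y := by linarith
  have h1ya : (0:ℝ) < (1+y)^a := Real.rpow_pos_of_pos h1y a
  rcases le_or_gt y 1 with hcase | hcase
  · have hb := small_bound a0 hy hcase
    have hle : (2:ℝ)^(-a) ≤ (1+y)^(-a) := by
      rw [Real.rpow_neg h1y.le, Real.rpow_neg (by norm_num : (0:ℝ) ≤ 2)]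
      exact inv_anti₀ h1ya (Real.rpow_le_rpow h1y.le (by linarith) a0.le)
    calc ‖S (coef a) (Complex.I * y)‖ ≤ Se := hb
      _ = Se * ((2:ℝ)^a * (2:ℝ)^(-a)) := by
          rw [← Real.rpow_add (by norm_num), add_neg_cancel, Real.rpow_zero, mul_one]
      _ ≤ (Se + K + 1) * ((2:ℝ)^a * (1+y)^(-a)) := by
          apply mul_le_mul (by linarith) (mul_le_mul_of_nonneg_left hle h2a.le) (by positivity)
            (by linarith)
      _ = (Se + K + 1) * 2^a * (1+y)^(-a) := by ring
  · have hy1 : (1:ℝ) ≤ y := hcase.le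
    have hy0 : (0:ℝ) < y := by linarith
    have hya : (0:ℝ) < y^a := Real.rpow_pos_of_pos hy0 a
    have hb : ‖S (coef a) (Complex.I * y)‖ ≤ K * y^(-a) := by
      rw [← norm_G_eq]; exact G_decay a0 ha1 hy1
    have key : y^(-a) ≤ 2^a * (1+y)^(-a) := by
      have h := Real.rpow_le_rpow h1y.le (by linarith : 1+y ≤ 2*y) a0.le
      rw [Real.mul_rpow (by norm_num) hy0.le] at h
      rw [Real.rpow_neg hy0.le, Real.rpow_neg h1y.le, ← div_eq_mul_inv, ← one_div,
        div_le_div_iff₀ hya h1ya]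
      linarith
    calc ‖S (coef a) (Complex.I * y)‖ ≤ K * y^(-a) := hb
      _ ≤ K * (2^a * (1+y)^(-a)) := mul_le_mul_of_nonneg_left key hK0
      _ ≤ (Se + K + 1) * 2^a * (1+y)^(-a) := by
          rw [← mul_assoc]
          apply mul_le_mul_of_nonneg_right ?_ (by positivity)
          apply mul_le_mul_of_nonneg_right (by linarith) h2a.le
      _ = (Se + K + 1) * 2^a * (1+y)^(-a) := by ring


lemma final_arith {a b m β C r t : ℝ} (hb : 0 < b) (hba : b ≤ a) (hmb : m * b = 1)
    (hβ : 0 < β) (hC : 0 ≤ C) (hr : 0 < r) (ht : 0 ≤ t) :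
    t * (C * (1 + β * (t^m * r))^(-a)) ≤ (C * β^(-b)) * r^(-b) := by
  rcases eq_or_lt_of_le ht with ht0 | ht0
  · rw [← ht0, zero_mul]
    have hβb : (0:ℝ) < β^(-b) := Real.rpow_pos_of_pos hβ _
    have hrb : (0:ℝ) < r^(-b) := Real.rpow_pos_of_pos hr _
    positivity
  · set y : ℝ := β * (t^m * r) with hy_def
    have htm : (0:ℝ) < t^m := Real.rpow_pos_of_pos ht0 m
    have hy : (0:ℝ) < y := by rw [hy_def]; positivity
    have h1y : (0:ℝ) < 1 + y := by linarith
    have hteq : t = (t^m)^b := by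
      conv_lhs => rw [← Real.rpow_one t, ← hmb]
      rw [Real.rpow_mul ht]
    have htm_eq : t^m = y / (β * r) := by
      rw [hy_def]; field_simp
    have hfrac : y^b * (1+y)^(-a) ≤ 1 := by
      have h1 : y^b ≤ (1+y)^b := Real.rpow_le_rpow hy.le (by linarith) hb.le
      have h2 : (1+y)^b * (1+y)^(-a) = (1+y)^(b-a) := by
        rw [← Real.rpow_add h1y]; ring_nf
      have h3 : (1+y)^(b-a) ≤ 1 :=
        Real.rpow_le_one_of_one_le_of_nonpos (by linarith) (by linarith)
      have h4 : (0:ℝ) < (1+y)^(-a) := Real.rpow_pos_of_pos h1y _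
      calc y^b * (1+y)^(-a) ≤ (1+y)^b * (1+y)^(-a) :=
            mul_le_mul_of_nonneg_right h1 h4.le
        _ = (1+y)^(b-a) := h2
        _ ≤ 1 := h3
    have hyb : (0:ℝ) < y^b := Real.rpow_pos_of_pos hy _
    have hβb : (0:ℝ) < β^b := Real.rpow_pos_of_pos hβ _
    have hrb : (0:ℝ) < r^b := Real.rpow_pos_of_pos hr _
    have hLHS : t * (C * (1+y)^(-a)) = (C / (β^b * r^b)) * (y^b * (1+y)^(-a)) := by
      rw [hteq, htm_eq, Real.div_rpow hy.le (by positivity), Real.mul_rpow hβ.le hr.le]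
      field_simp
    have hRHS : (C * β^(-b)) * r^(-b) = C / (β^b * r^b) := by
      rw [Real.rpow_neg hβ.le, Real.rpow_neg hr.le]
      field_simp
    rw [hLHS, hRHS]
    calc (C / (β^b * r^b)) * (y^b * (1+y)^(-a)) ≤ (C / (β^b * r^b)) * 1 :=
          mul_le_mul_of_nonneg_left hfrac (by positivity)
      _ = C / (β^b * r^b) := mul_one _


lemma confluent_eq (a : ℝ) (z : ℂ) :
    confluentHypergeom ((a:ℝ):ℂ) (((2*a:ℝ)):ℂ) z = S (coef a) z := by
  rw [confluentHypergeom, S]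
  apply tsum_congr
  intro k
  rw [coef, mul_div_right_comm]


end S18
end

theorem stmt18 (n l : ℕ) (hn : 1 ≤ n) (hl : 1 ≤ l) :
    ∃ C : ℝ, 0 < C ∧
      ∀ t : ℝ, 0 ≤ t → ∀ ξ : EuclideanSpace ℝ (Fin n), ξ ≠ 0 →
        ‖(t : ℂ) *
            Complex.exp (-(4 * Complex.I / (2 * (l : ℂ) + 1) *
              ((t ^ ((2 * (l : ℝ) + 1) / 2) * ‖ξ‖ : ℝ) : ℂ)) / 2) *
            confluentHypergeom ((2 * (l : ℂ) + 3) / (2 * (2 * (l : ℂ) + 1)))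
              ((2 * (l : ℂ) + 3) / (2 * (l : ℂ) + 1))
              (4 * Complex.I / (2 * (l : ℂ) + 1) *
                ((t ^ ((2 * (l : ℝ) + 1) / 2) * ‖ξ‖ : ℝ) : ℂ))‖ ≤
          C * ‖ξ‖ ^ (-(2 : ℝ) / (2 * (l : ℝ) + 1)) := by
  have hL : (1:ℝ) ≤ (l:ℝ) := by exact_mod_cast hl
  have hden : (0:ℝ) < 2*(l:ℝ)+1 := by linarith
  set a : ℝ := (2*(l:ℝ)+3)/(2*(2*(l:ℝ)+1)) with ha_def
  set b : ℝ := 2/(2*(l:ℝ)+1) with hb_def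
  set m : ℝ := (2*(l:ℝ)+1)/2 with hm_def
  set β : ℝ := 4/(2*(l:ℝ)+1) with hβ_def
  have ha : 1/2 < a := by
    rw [ha_def, lt_div_iff₀ (by linarith)]; nlinarith
  have ha1 : a < 1 := by
    rw [ha_def, div_lt_one (by linarith)]; nlinarith
  have hb : 0 < b := by rw [hb_def]; positivity
  have hba : b ≤ a := by
    rw [hb_def, ha_def, div_le_div_iff₀ (by linarith) (by linarith)]; nlinarith
  have hmb : m * b = 1 := by rw [hm_def, hb_def]; field_simp
  have hβpos : 0 < β := by rw [hβ_def]; positivity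
  obtain ⟨C, hC, hmain⟩ := S18.main_bound ha ha1
  refine ⟨C * β^(-b), by positivity, ?_⟩
  intro t ht ξ hξ
  set r : ℝ := ‖ξ‖ with hr_def
  have hr : 0 < r := by rw [hr_def]; exact norm_pos_iff.mpr hξ
  set x : ℝ := t ^ ((2*(l:ℝ)+1)/2) * r with hx_def
  have hx0 : 0 ≤ x := by
    rw [hx_def]; positivity
  set y : ℝ := β * x with hy_def
  have hy0 : 0 ≤ y := by rw [hy_def]; positivity
  -- cast facts
  have hdenC : (2*(l:ℂ)+1) ≠ 0 := by
    have : ((2*(l:ℝ)+1 : ℝ):ℂ) = 2*(l:ℂ)+1 := by push_cast; ring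
    rw [← this]
    exact_mod_cast hden.ne'
  have hzeq : (4 * Complex.I / (2*(l:ℂ)+1) * (x:ℂ)) = Complex.I * (y:ℂ) := by
    rw [hy_def, hβ_def]
    push_cast
    field_simp
  have hαeq : ((2*(l:ℂ)+3) / (2*(2*(l:ℂ)+1))) = ((a:ℝ):ℂ) := by
    rw [ha_def]
    push_cast
    ring
  have hγeq : ((2*(l:ℂ)+3) / (2*(l:ℂ)+1)) = (((2*a:ℝ)):ℂ) := by
    rw [ha_def]
    push_cast
    field_simp
  rw [hzeq, hαeq, hγeq, S18.confluent_eq]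
  have hexp : ‖Complex.exp (-(Complex.I * (y:ℂ))/2)‖ = 1 := by
    rw [Complex.norm_exp]
    have : (-(Complex.I * (y:ℂ))/2).re = 0 := by simp
    rw [this, Real.exp_zero]
  rw [norm_mul, norm_mul, hexp, mul_one, Complex.norm_real, Real.norm_eq_abs,
    abs_of_nonneg ht]
  calc t * ‖S18.S (S18.coef a) (Complex.I * (y:ℂ))‖
      ≤ t * (C * (1+y)^(-a)) := by
        apply mul_le_mul_of_nonneg_left (hmain y hy0) ht
    _ ≤ (C * β^(-b)) * r^(-b) := by
        rw [hy_def, hx_def]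
        exact S18.final_arith hb hba hmb hβpos hC.le hr ht
    _ = (C * β^(-b)) * r^(-(2:ℝ)/(2*(l:ℝ)+1)) := by
        rw [hb_def]
        norm_num [neg_div]
end
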